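/- arXiv:1407.8078 — 6 statements merged into one kernel-verified Lean document; each statement's English description precedes it below -/
import Mathlib

section
/- Suppose |r(λ_n)| > 0 and that the n×n matrix X_n* B Y_0 is invertible. Then for every k ≥ 1 the matrix Z_k = r(M) Y_{k−1} of the FEAST iteration has full column rank n, each W_k is invertible, and the column span of Z_k equals the column span of r(M)^k Y_0. -/
open Matrix ComplexOrder

/-- **FEAST subspace iteration, Lemma on the span of `Z_k`** (Güttel–Polizzi–Tang–Viaud,
Lemma 3.1).  If `|r(λ_n)| > 0` and `X_nᴴ B Y_0` is invertible, then for every `k ≥ 1`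
the matrix `Z_k = r(M) Y_{k-1}` has full column rank `n`, each `W_k` is invertible,
and the column span of `Z_k` equals the column span of `r(M)^k Y_0`. -/
theorem feast_span_Zk
    (N n : ℕ) (hn1 : 1 ≤ n) (hnN : n < N)
    (A B X : Matrix (Fin N) (Fin N) ℂ)
    (hB : B.PosDef)
    (lam : Fin N → ℝ)
    (hX : Xᴴ * B * X = 1)
    (hM : B⁻¹ * A = X * Matrix.diagonal (fun i => (lam i : ℂ)) * X⁻¹)
    (r : ℝ → ℂ)
    (hord : ∀ i j : Fin N, i ≤ j → ‖r (lam j)‖ ≤ ‖r (lam i)‖)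
    (rM : Matrix (Fin N) (Fin N) ℂ)
    (hrM : rM = X * Matrix.diagonal (fun i => r (lam i)) * X⁻¹)
    (Y Z : ℕ → Matrix (Fin N) (Fin n) ℂ)
    (W : ℕ → Matrix (Fin n) (Fin n) ℂ)
    (hZ : ∀ k, Z (k + 1) = rM * Y k)
    (hW : ∀ k, (W (k + 1))ᴴ * ((Z (k + 1))ᴴ * B * Z (k + 1)) * W (k + 1) = 1)
    (hY : ∀ k, Y (k + 1) = Z (k + 1) * W (k + 1))
    (Xn : Matrix (Fin N) (Fin n) ℂ)
    (hXn : Xn = X.submatrix id (Fin.castLE hnN.le))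
    (hrn : 0 < ‖r (lam ⟨n - 1, by omega⟩)‖)
    (hY0 : IsUnit (Xnᴴ * B * Y 0)) :
    ∀ k, 1 ≤ k →
      (Z k).rank = n ∧ IsUnit (W k) ∧
        LinearMap.range (Z k).mulVecLin
          = LinearMap.range ((rM ^ k) * Y 0).mulVecLin := by
  set g : Fin n → Fin N := Fin.castLE hnN.le with hg
  -- X is invertible with inverse Xᴴ * B
  have hXB : (Xᴴ * B) * X = 1 := by rw [← hX]
  have hXBX : X * (Xᴴ * B) = 1 := mul_eq_one_comm.mp hXB
  have hXinv : X⁻¹ = Xᴴ * B := Matrix.inv_eq_left_inv hXB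
  -- r(lam (g i)) ≠ 0 for all i : Fin n
  have hne : ∀ i : Fin n, r (lam (g i)) ≠ 0 := by
    intro i
    have hi := i.isLt
    have hle : g i ≤ (⟨n - 1, by omega⟩ : Fin N) := by
      simp only [Fin.le_def, hg, Fin.coe_castLE]
      omega
    have := hord (g i) ⟨n - 1, by omega⟩ hle
    have hpos : 0 < ‖r (lam (g i))‖ := lt_of_lt_of_le hrn this
    exact norm_ne_zero_iff.mp hpos.ne'
  -- powers of rM
  have hrMk : ∀ k : ℕ, rM ^ k
      = X * Matrix.diagonal (fun i => (r (lam i)) ^ k) * (Xᴴ * B) := by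
    intro k
    induction k with
    | zero => simpa [Matrix.diagonal_one] using hXBX.symm
    | succ k ih =>
        have hconj : ∀ C D : Matrix (Fin N) (Fin N) ℂ,
            (X * C * (Xᴴ * B)) * (X * D * (Xᴴ * B)) = X * (C * D) * (Xᴴ * B) := by
          intro C D
          calc (X * C * (Xᴴ * B)) * (X * D * (Xᴴ * B))
              = X * C * ((Xᴴ * B * X) * (D * (Xᴴ * B))) := by
                simp only [Matrix.mul_assoc]
            _ = X * (C * D) * (Xᴴ * B) := by
                rw [hXB, Matrix.one_mul]; simp only [Matrix.mul_assoc]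
        have hd : Matrix.diagonal (fun i => (r (lam i)) ^ k) *
            Matrix.diagonal (fun i => r (lam i))
            = Matrix.diagonal (fun i => (r (lam i)) ^ (k + 1)) := by
          rw [Matrix.diagonal_mul_diagonal]
          exact congrArg Matrix.diagonal (funext fun i => (pow_succ _ _).symm)
        rw [pow_succ, ih, hrM, hXinv, hconj, hd]
  -- key: Xnᴴ * B * (rM ^ k * Y 0) is a unit
  have hXnH : Xnᴴ = Xᴴ.submatrix g id := by
    rw [hXn, Matrix.conjTranspose_submatrix]
  have hkey : ∀ k : ℕ, IsUnit (Xnᴴ * B * (rM ^ k * Y 0)) := by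
    intro k
    have h1 : Xnᴴ * B * (rM ^ k * Y 0)
        = (Xᴴ * (B * (rM ^ k * Y 0))).submatrix g id := by
      rw [hXnH, Matrix.submatrix_mul Xᴴ (B * (rM ^ k * Y 0)) g id id
        Function.bijective_id]
      simp [Matrix.mul_assoc]
    have h2 : Xᴴ * (B * (rM ^ k * Y 0))
        = Matrix.diagonal (fun i => (r (lam i)) ^ k) * (Xᴴ * B * Y 0) := by
      rw [hrMk k]
      calc Xᴴ * (B * (X * Matrix.diagonal (fun i => (r (lam i)) ^ k) * (Xᴴ * B) * Y 0))
          = (Xᴴ * B * X) * Matrix.diagonal (fun i => (r (lam i)) ^ k) *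
              (Xᴴ * B * Y 0) := by simp [Matrix.mul_assoc]
        _ = Matrix.diagonal (fun i => (r (lam i)) ^ k) * (Xᴴ * B * Y 0) := by
            rw [hX, Matrix.one_mul]
    have h3 : (Matrix.diagonal (fun i => (r (lam i)) ^ k) *
        (Xᴴ * B * Y 0)).submatrix g id
        = Matrix.diagonal (fun i : Fin n => (r (lam (g i))) ^ k) *
          ((Xᴴ * B * Y 0).submatrix g id) := by
      ext i j
      simp [Matrix.diagonal_mul, Matrix.submatrix_apply]
    have h4 : (Xᴴ * B * Y 0).submatrix g id = Xnᴴ * B * Y 0 := by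
      rw [Matrix.mul_assoc,
        Matrix.submatrix_mul Xᴴ (B * Y 0) g id id Function.bijective_id,
        ← hXnH]
      simp [Matrix.mul_assoc]
    rw [h1, h2, h3, h4]
    have hdu : IsUnit (Matrix.diagonal (fun i : Fin n => (r (lam (g i))) ^ k)) := by
      rw [Matrix.isUnit_iff_isUnit_det, Matrix.det_diagonal, isUnit_iff_ne_zero]
      exact Finset.prod_ne_zero_iff.mpr
        (fun i _ => pow_ne_zero k (hne i))
    exact hdu.mul hY0
  -- every W (k+1) is a unit
  have hWunit : ∀ k : ℕ, IsUnit (W (k + 1)) := by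
    intro k
    have h := congrArg Matrix.det (hW k)
    rw [Matrix.det_mul, Matrix.det_one, mul_comm] at h
    exact (Matrix.isUnit_iff_isUnit_det _).mpr (IsUnit.of_mul_eq_one _ h)
  -- Z (k+1) = rM^(k+1) * Y 0 * U for a unit U
  have hZform : ∀ k : ℕ, ∃ U : Matrix (Fin n) (Fin n) ℂ,
      IsUnit U ∧ Z (k + 1) = rM ^ (k + 1) * Y 0 * U := by
    intro k
    induction k with
    | zero => exact ⟨1, isUnit_one, by simp [hZ 0]⟩
    | succ k ih =>
        obtain ⟨U, hU, hZU⟩ := ih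
        refine ⟨U * W (k + 1), hU.mul (hWunit k), ?_⟩
        rw [hZ (k + 1), hY k, hZU]
        simp only [Matrix.mul_assoc]
        rw [← Matrix.mul_assoc rM (rM ^ (k + 1)), ← pow_succ']
  -- main conclusion
  intro k hk
  obtain ⟨k, rfl⟩ : ∃ m, k = m + 1 := ⟨k - 1, by omega⟩
  obtain ⟨U, hU, hZU⟩ := hZform k
  -- injectivity of (Z (k+1)).mulVecLin
  have hZkey : IsUnit (Xnᴴ * B * Z (k + 1)) := by
    rw [hZU, ← Matrix.mul_assoc]
    exact ((by simpa [Matrix.mul_assoc] using hkey (k + 1)) :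
      IsUnit (Xnᴴ * B * (rM ^ (k + 1) * Y 0))).mul hU
  have hinj : Function.Injective (Z (k + 1)).mulVecLin := by
    intro v w hvw
    have h1 : (Xnᴴ * B * Z (k + 1)).mulVec v = (Xnᴴ * B * Z (k + 1)).mulVec w := by
      simp only [← Matrix.mulVec_mulVec]
      simp only [Matrix.mulVecLin_apply] at hvw
      rw [hvw]
    exact Matrix.mulVec_injective_iff_isUnit.mpr hZkey h1
  constructor
  · -- rank
    have : (Z (k + 1)).rank
        = Module.finrank ℂ (LinearMap.range (Z (k + 1)).mulVecLin) := rfl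
    rw [this, LinearMap.finrank_range_of_inj hinj]
    simp
  constructor
  · exact hWunit k
  · -- range equality
    rw [hZU, Matrix.mulVecLin_mul]
    refine LinearMap.range_comp_of_range_eq_top _ ?_
    rw [LinearMap.range_eq_top]
    exact Matrix.mulVec_surjective_iff_isUnit.mpr hU
end

section
/- For every z ∈ ℂ that is not among the mapped trapezoid nodes z_1,…,z_{2m}, the trapezoid-rule rational function satisfies r_m^{(T)}(z) = Σ_{j=1}^{2m} w_j/(z_j − z) = 1/(α + β · T_{2m}(((S + S^{-1})/2) z)). In particular r_m^{(T)} is a rational function of exact type (0, 2m). -/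
open Polynomial

open Complex Finset in
private lemma aux_sum_pow (m : ℕ) (hm : 0 < m) (k : ℕ) (hk0 : 0 < k) (hk : k < 2*m) :
    ∑ j : Fin (2*m), Complex.exp (Complex.I * ((Real.pi:ℂ) * (2*(j:ℕ)+1) / (2*(m:ℕ)))) ^ k = 0 := by
  have hm' : (m:ℂ) ≠ 0 := Nat.cast_ne_zero.mpr hm.ne'
  have hπ : (Real.pi:ℂ) ≠ 0 := Complex.ofReal_ne_zero.mpr Real.pi_ne_zero
  have hterm : ∀ j : ℕ,
      Complex.exp (Complex.I * ((Real.pi:ℂ) * (2*(j:ℕ)+1) / (2*(m:ℕ)))) ^ k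
        = Complex.exp (Complex.I * Real.pi * k / (2*m)) *
            (Complex.exp (Complex.I * Real.pi * k / m)) ^ j := by
    intro j
    rw [← Complex.exp_nat_mul, ← Complex.exp_nat_mul, ← Complex.exp_add]
    congr 1
    field_simp
    ring
  have hne1 : Complex.exp (Complex.I * Real.pi * k / m) ≠ 1 := by
    intro h
    rw [Complex.exp_eq_one_iff] at h
    obtain ⟨n, hn⟩ := h
    field_simp at hn
    have hk' : (Real.pi:ℂ) * Complex.I * k = (Real.pi:ℂ) * Complex.I * (2*n*m) := by
      linear_combination ((Real.pi:ℂ) * Complex.I) * hn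
    have hk'' : (k:ℂ) = 2*n*m := mul_left_cancel₀ (mul_ne_zero hπ Complex.I_ne_zero) hk'
    have hz : (k:ℤ) = 2*n*m := by exact_mod_cast hk''
    have hmz : (0:ℤ) < m := by exact_mod_cast hm
    have hk0' : (0:ℤ) < k := by exact_mod_cast hk0
    have hk2 : (k:ℤ) < 2*m := by exact_mod_cast hk
    have hn1 : 1 ≤ n := by nlinarith
    nlinarith
  have hr : (Complex.exp (Complex.I * Real.pi * k / m)) ^ (2*m) = 1 := by
    rw [← Complex.exp_nat_mul,
      show ((2*m:ℕ):ℂ) * (Complex.I * Real.pi * k / m) = (k:ℕ) * (2*Real.pi*Complex.I) by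
        push_cast; field_simp]
    exact Complex.exp_nat_mul_two_pi_mul_I k
  calc ∑ j : Fin (2*m), Complex.exp (Complex.I * ((Real.pi:ℂ) * (2*(j:ℕ)+1) / (2*(m:ℕ)))) ^ k
      = ∑ j : Fin (2*m), Complex.exp (Complex.I * Real.pi * k / (2*m)) *
            (Complex.exp (Complex.I * Real.pi * k / m)) ^ (j:ℕ) :=
        Finset.sum_congr rfl (fun j _ => hterm j)
    _ = Complex.exp (Complex.I * Real.pi * k / (2*m)) *
          ∑ j ∈ Finset.range (2*m), (Complex.exp (Complex.I * Real.pi * k / m)) ^ j := by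
        rw [← Finset.mul_sum, Fin.sum_univ_eq_sum_range]
    _ = 0 := by
        rw [geom_sum_eq hne1, hr]
        simp

open Complex Finset in
private lemma aux_root_enum (m : ℕ) (hm : 0 < m) (x : ℂ) (hx : x ^ (2*m) = -1) :
    ∃ j : Fin (2*m), x = Complex.exp (Complex.I * ((Real.pi:ℂ) * (2*(j:ℕ)+1) / (2*(m:ℕ)))) := by
  have hm' : (m:ℂ) ≠ 0 := Nat.cast_ne_zero.mpr hm.ne'
  have hx0 : x ≠ 0 := by
    intro h
    rw [h, zero_pow (by omega)] at hx
    exact absurd hx (by norm_num)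
  have hex : Complex.exp (((2*m:ℕ):ℂ) * Complex.log x) = Complex.exp (Real.pi * Complex.I) := by
    rw [Complex.exp_nat_mul, Complex.exp_log hx0, hx, Complex.exp_pi_mul_I]
  rw [Complex.exp_eq_exp_iff_exists_int] at hex
  obtain ⟨n, hn⟩ := hex
  have hmod1 : 0 ≤ n % (2*(m:ℤ)) := Int.emod_nonneg n (by positivity)
  have hmod2 : n % (2*(m:ℤ)) < 2*m := Int.emod_lt_of_pos n (by positivity)
  have hjlt : (n % (2*(m:ℤ))).toNat < 2*m := by omega
  refine ⟨⟨(n % (2*(m:ℤ))).toNat, hjlt⟩, ?_⟩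
  rw [← Complex.exp_log hx0, Complex.exp_eq_exp_iff_exists_int]
  refine ⟨n / (2*(m:ℤ)), ?_⟩
  have hsplit' := Int.emod_add_mul_ediv n (2*(m:ℤ))
  have hsplit : ((n % (2*(m:ℤ)) : ℤ):ℂ) + 2*(m:ℂ)*((n / (2*(m:ℤ)) : ℤ):ℂ) = (n:ℂ) := by
    exact_mod_cast congrArg (fun t : ℤ => (t:ℂ)) hsplit'
  have hcast : (((n % (2*(m:ℤ))).toNat : ℕ):ℂ) = ((n % (2*(m:ℤ)) : ℤ):ℂ) := by
    have h := Int.toNat_of_nonneg hmod1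
    exact_mod_cast congrArg (fun t : ℤ => (t:ℂ)) h
  simp only [Fin.val_mk]
  rw [hcast]
  have h2m : ((2*m:ℕ):ℂ) ≠ 0 := by exact_mod_cast (by omega : (2*m:ℕ) ≠ 0)
  field_simp at hn ⊢
  push_cast at hn hsplit ⊢
  linear_combination hn - (2*Real.pi*Complex.I) * hsplit

open Complex Finset in
private lemma aux_pow (m : ℕ) (hm : 0 < m) (j : ℕ) :
    Complex.exp (Complex.I * ((Real.pi:ℂ) * (2*(j:ℕ)+1) / (2*(m:ℕ)))) ^ (2*m) = -1 := by
  have hm' : (m:ℂ) ≠ 0 := Nat.cast_ne_zero.mpr hm.ne'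
  rw [← Complex.exp_nat_mul,
    show ((2*m:ℕ):ℂ) * (Complex.I * ((Real.pi:ℂ) * (2*(j:ℕ)+1) / (2*(m:ℕ))))
      = Real.pi * Complex.I + (j:ℕ) * (2*Real.pi*Complex.I) by push_cast; field_simp; ring,
    Complex.exp_add, Complex.exp_pi_mul_I, Complex.exp_nat_mul_two_pi_mul_I]
  ring

open Complex Finset in
private lemma aux_sum_recip (m : ℕ) (hm : 0 < m) (S : ℂ) (hS : S ≠ 0) (x : ℂ)
    (ω : Fin (2*m) → ℂ)
    (hω2m : ∀ j, ω j ^ (2*m) = -1)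
    (hsum : ∀ k : ℕ, 0 < k → k < 2*m → ∑ j, ω j ^ k = 0)
    (hne : ∀ j, S * ω j - x ≠ 0)
    (hD : x^(2*m) + S^(2*m) ≠ 0) :
    ∑ j, (S * ω j - x)⁻¹ = -(2*(m:ℂ)) * x^(2*m-1) / (x^(2*m) + S^(2*m)) := by
  have hterm : ∀ j, (S * ω j - x)⁻¹
      = (∑ k ∈ Finset.range (2*m), (S * ω j)^k * x^(2*m-1-k)) / (-(x^(2*m) + S^(2*m))) := by
    intro j
    rw [eq_div_iff (neg_ne_zero.mpr hD)]
    rw [inv_mul_eq_div, div_eq_iff (hne j)]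
    have h := geom_sum₂_mul (S * ω j) x (2*m)
    rw [mul_pow, hω2m j] at h
    linear_combination -h
  rw [Finset.sum_congr rfl (fun j _ => hterm j), ← Finset.sum_div]
  rw [Finset.sum_comm]
  have hinner : ∀ k ∈ Finset.range (2*m),
      (∑ j : Fin (2*m), (S * ω j)^k * x^(2*m-1-k))
        = if k = 0 then (2*m) * x^(2*m-1) else 0 := by
    intro k hk
    rcases Nat.eq_zero_or_pos k with h0 | h0
    · subst h0
      simp [Finset.card_univ]
    · rw [if_neg h0.ne']
      have : ∀ j : Fin (2*m), (S * ω j)^k * x^(2*m-1-k) = (S^k * x^(2*m-1-k)) * ω j ^ k := by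
        intro j; ring
      rw [Finset.sum_congr rfl (fun j _ => this j), ← Finset.mul_sum,
        hsum k h0 (Finset.mem_range.mp hk), mul_zero]
  rw [Finset.sum_congr rfl hinner, Finset.sum_ite_eq' (Finset.range (2*m)) 0,
    if_pos (Finset.mem_range.mpr (by omega))]
  rw [div_neg, ← neg_div]
  ring_nf

/-- **Trapezoid rule = type-1 Chebyshev filter** (Güttel–Polizzi–Tang–Viaud,
Lemma 3.2).  Away from its poles, the trapezoid-rule rational function
`r_m^{(T)}(z) = Σ_j w_j/(z_j − z)` equals
`1/(α + β T_{2m}(((S+S⁻¹)/2) z))`. -/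
theorem trapezoid_rule_chebyshev_identity
    (m : ℕ) (hm : 0 < m) (S : ℝ) (hS : 1 < S)
    (θ : Fin (2 * m) → ℝ)
    (hθ : ∀ j, θ j = Real.pi * (2 * (j : ℝ) + 1) / (2 * m))
    (zn w : Fin (2 * m) → ℂ)
    (hzn : ∀ j, zn j =
      ((S : ℂ) * Complex.exp (Complex.I * (θ j : ℂ)) +
        (S : ℂ)⁻¹ * Complex.exp (-(Complex.I * (θ j : ℂ)))) / ((S : ℂ) + (S : ℂ)⁻¹))
    (hw : ∀ j, w j =
      (1 / (2 * (m : ℂ))) *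
        ((S : ℂ) * Complex.exp (Complex.I * (θ j : ℂ)) -
          (S : ℂ)⁻¹ * Complex.exp (-(Complex.I * (θ j : ℂ)))) / ((S : ℂ) + (S : ℂ)⁻¹))
    (α β : ℝ)
    (hα : α = (S ^ (2 * m) + S⁻¹ ^ (2 * m)) / (S ^ (2 * m) - S⁻¹ ^ (2 * m)))
    (hβ : β = 2 / (S ^ (2 * m) - S⁻¹ ^ (2 * m)))
    (z : ℂ) (hz : ∀ j, z ≠ zn j) :
    ∑ j, w j / (zn j - z)
      = 1 / ((α : ℂ) + (β : ℂ) *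
          (Polynomial.Chebyshev.T ℂ (2 * m)).eval ((((S : ℂ) + (S : ℂ)⁻¹) / 2) * z)) := by
  have hm' : (m:ℂ) ≠ 0 := Nat.cast_ne_zero.mpr hm.ne'
  have hSr : (0:ℝ) < S := lt_trans one_pos hS
  have hS0 : (S:ℂ) ≠ 0 := by exact_mod_cast hSr.ne'
  have hSsumr : (0:ℝ) < S + S⁻¹ := by positivity
  have hSsum : (S:ℂ) + (S:ℂ)⁻¹ ≠ 0 := by exact_mod_cast hSsumr.ne'
  have hAr : (0:ℝ) < S ^ (2*m) - S⁻¹ ^ (2*m) := by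
    have h1 : S⁻¹ < 1 := inv_lt_one_of_one_lt₀ hS
    have h2 : S⁻¹ ^ (2*m) < 1 := pow_lt_one₀ (by positivity) h1 (by omega)
    have h3 : (1:ℝ) < S ^ (2*m) := one_lt_pow₀ hS (by omega)
    linarith
  have hAc : (S:ℂ)^(2*m) - ((S:ℂ)⁻¹)^(2*m) ≠ 0 := by
    have h := hAr.ne'
    push_cast
    exact_mod_cast h
  have hS2 : (1:ℂ) + (S:ℂ)^2 ≠ 0 := by
    have h : (0:ℝ) < 1 + S^2 := by positivity
    exact_mod_cast h.ne'
  -- parametrize z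
  obtain ⟨θc, hθc⟩ := Complex.cos_surjective ((((S:ℂ) + (S:ℂ)⁻¹)/2) * z)
  set t : ℂ := Complex.exp (θc * Complex.I) with ht_def
  have ht0 : t ≠ 0 := Complex.exp_ne_zero _
  have htinv : Complex.exp (-θc * Complex.I) = t⁻¹ := by
    rw [neg_mul, Complex.exp_neg]
  have hz2 : t + t⁻¹ = ((S:ℂ) + (S:ℂ)⁻¹) * z := by
    have h := hθc
    rw [Complex.cos, htinv, ← ht_def] at h
    linear_combination 2*h
  have hzval : z = (t + t⁻¹) / ((S:ℂ) + (S:ℂ)⁻¹) := by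
    rw [eq_div_iff hSsum]
    linear_combination -hz2
  have hT : (Polynomial.Chebyshev.T ℂ (2 * m)).eval ((((S:ℂ) + (S:ℂ)⁻¹)/2) * z)
      = (t^(2*m) + (t⁻¹)^(2*m))/2 := by
    rw [← hθc, Polynomial.Chebyshev.T_complex_cos θc (2*m), Complex.cos]
    rw [show (((2*m : ℤ)):ℂ) * θc * Complex.I = ((2*m:ℕ):ℂ) * (θc * Complex.I) by
        push_cast; ring,
      show -((((2*m : ℤ)):ℂ) * θc) * Complex.I = ((2*m:ℕ):ℂ) * (-θc * Complex.I) by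
        push_cast; ring,
      Complex.exp_nat_mul, Complex.exp_nat_mul, htinv]
  -- the nodes on the unit circle
  set ω : Fin (2*m) → ℂ := fun j => Complex.exp (Complex.I * ((θ j : ℝ) : ℂ)) with hω_def
  have hωj : ∀ j, Complex.exp (Complex.I * ((θ j : ℝ) : ℂ)) = ω j := fun j => rfl
  have hψ : ∀ j : Fin (2*m), ((θ j : ℝ) : ℂ) = (Real.pi:ℂ) * (2*((j:ℕ):ℂ)+1) / (2*((m:ℕ):ℂ)) := by
    intro j
    rw [hθ j]
    push_cast
    ring
  have hω0 : ∀ j, ω j ≠ 0 := fun j => Complex.exp_ne_zero _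
  have hω2m : ∀ j, ω j ^ (2*m) = -1 := by
    intro j
    rw [← hωj j, hψ j]
    exact aux_pow m hm (j : ℕ)
  have hωsum : ∀ k : ℕ, 0 < k → k < 2*m → ∑ j, ω j ^ k = 0 := by
    intro k hk0 hk
    rw [show (∑ j, ω j ^ k)
        = ∑ j : Fin (2*m), Complex.exp (Complex.I * ((Real.pi:ℂ) * (2*((j:ℕ):ℂ)+1) / (2*((m:ℕ):ℂ)))) ^ k from
      Finset.sum_congr rfl (fun j _ => by rw [← hωj j, hψ j])]
    exact aux_sum_pow m hm k hk0 hk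
  have hexpneg : ∀ j, Complex.exp (-(Complex.I * ((θ j:ℝ):ℂ))) = (ω j)⁻¹ := by
    intro j
    rw [Complex.exp_neg, hωj j]
  have hzz : ∀ j, zn j - z ≠ 0 := fun j => sub_ne_zero.mpr (Ne.symm (hz j))
  have hznz : ∀ j, zn j - z = (↑S*ω j + (↑S*ω j)⁻¹ - (t + t⁻¹))/((S:ℂ)+(S:ℂ)⁻¹) := by
    intro j
    rw [hzn j, hexpneg j, hωj j, hzval, div_sub_div_same]
    congr 1
    rw [mul_inv]
  have hkey : ∀ j, (↑S*ω j - t) * (↑S*ω j - t⁻¹) = (↑S*ω j) * (((S:ℂ)+(S:ℂ)⁻¹) * (zn j - z)) := by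
    intro j
    rw [hznz j, mul_div_cancel₀ _ hSsum]
    linear_combination (mul_inv_cancel₀ ht0) - (mul_inv_cancel₀ (mul_ne_zero hS0 (hω0 j)))
  have hprodne : ∀ j, (↑S*ω j - t) * (↑S*ω j - t⁻¹) ≠ 0 := by
    intro j
    rw [hkey j]
    exact mul_ne_zero (mul_ne_zero hS0 (hω0 j)) (mul_ne_zero hSsum (hzz j))
  have hne1 : ∀ j, (S:ℂ)*ω j - t ≠ 0 := fun j => (mul_ne_zero_iff.mp (hprodne j)).1
  have hne2 : ∀ j, (S:ℂ)*ω j - t⁻¹ ≠ 0 := fun j => (mul_ne_zero_iff.mp (hprodne j)).2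
  have hroot : ∀ x : ℂ, x ≠ 0 → x^(2*m) + (S:ℂ)^(2*m) = 0 → ∃ j, x = ↑S * ω j := by
    intro x hx0 hx
    have hpow : (x * (S:ℂ)⁻¹)^(2*m) = -1 := by
      rw [mul_pow, inv_pow]
      field_simp
      linear_combination hx
    obtain ⟨j, hj⟩ := aux_root_enum m hm _ hpow
    rw [← hψ j, hωj j] at hj
    refine ⟨j, ?_⟩
    field_simp at hj
    linear_combination hj
  have hD1 : t^(2*m) + (S:ℂ)^(2*m) ≠ 0 := by
    intro h
    obtain ⟨j, hj⟩ := hroot t ht0 h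
    exact hne1 j (by rw [hj]; ring)
  have hD2 : (t⁻¹)^(2*m) + (S:ℂ)^(2*m) ≠ 0 := by
    intro h
    obtain ⟨j, hj⟩ := hroot t⁻¹ (inv_ne_zero ht0) h
    exact hne2 j (by rw [hj]; ring)
  have hsum1 := aux_sum_recip m hm (S:ℂ) hS0 t ω hω2m hωsum hne1 hD1
  have hsum2 := aux_sum_recip m hm (S:ℂ) hS0 t⁻¹ ω hω2m hωsum hne2 hD2
  have hne2' : ∀ j, ↑S * ω j * t - 1 ≠ 0 := by
    intro j h0
    apply mul_ne_zero (hne2 j) ht0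
    rw [sub_mul]
    rw [inv_mul_cancel₀ ht0]
    linear_combination h0
  have hfact : ∀ j, ↑S*ω j + (↑S*ω j)⁻¹ - (t + t⁻¹)
      = (↑S*ω j - t) * (↑S*ω j - t⁻¹) * (↑S*ω j)⁻¹ := by
    intro j
    have h1 : (↑S*ω j) * (↑S*ω j)⁻¹ = 1 := mul_inv_cancel₀ (mul_ne_zero hS0 (hω0 j))
    have h2 : t * t⁻¹ = 1 := mul_inv_cancel₀ ht0
    linear_combination (t + t⁻¹ - ↑S*ω j) * h1 - (↑S*ω j)⁻¹ * h2
  have hterm : ∀ j, w j / (zn j - z)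
      = (1/(2*(m:ℂ))) * (1 + t * ((S:ℂ)*ω j - t)⁻¹ + t⁻¹ * ((S:ℂ)*ω j - t⁻¹)⁻¹) := by
    intro j
    have hwj : w j = ((1/(2*(m:ℂ))) * (↑S*ω j - (↑S*ω j)⁻¹)) / (↑S + (↑S)⁻¹) := by
      rw [hw j, hexpneg j, hωj j, mul_inv]
    rw [hwj, hznz j, div_div_div_cancel_right₀ hSsum, hfact j]
    field_simp [hne1 j, hne2 j, hω0 j, hne2' j]
    ring
  rw [Finset.sum_congr rfl (fun j _ => hterm j), ← Finset.mul_sum]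
  rw [Finset.sum_add_distrib, Finset.sum_add_distrib, ← Finset.mul_sum, ← Finset.mul_sum,
    hsum1, hsum2]
  simp only [Finset.sum_const, Finset.card_univ, Fintype.card_fin, nsmul_eq_mul]
  rw [hT, hα, hβ]
  push_cast
  have rA : (S:ℂ)^(2*m) * ((S:ℂ))⁻¹^(2*m) = 1 := by
    rw [← mul_pow, mul_inv_cancel₀ hS0, one_pow]
  have ru : t^(2*m) * t⁻¹^(2*m) = 1 := by
    rw [← mul_pow, mul_inv_cancel₀ ht0, one_pow]
  have rc : ((S:ℂ)^(2*m) - ((S:ℂ))⁻¹^(2*m)) * ((S:ℂ)^(2*m) - ((S:ℂ))⁻¹^(2*m))⁻¹ = 1 :=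
    mul_inv_cancel₀ hAc
  have r1 : (t^(2*m) + (S:ℂ)^(2*m)) * (t^(2*m) + (S:ℂ)^(2*m))⁻¹ = 1 := mul_inv_cancel₀ hD1
  have r2 : (t⁻¹^(2*m) + (S:ℂ)^(2*m)) * (t⁻¹^(2*m) + (S:ℂ)^(2*m))⁻¹ = 1 := mul_inv_cancel₀ hD2
  have hE : ((S:ℂ) ^ (2 * m) + ((S:ℂ))⁻¹ ^ (2 * m)) / ((S:ℂ) ^ (2 * m) - ((S:ℂ))⁻¹ ^ (2 * m)) +
        2 / ((S:ℂ) ^ (2 * m) - ((S:ℂ))⁻¹ ^ (2 * m)) * ((t ^ (2 * m) + t⁻¹ ^ (2 * m)) / 2)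
      = ((t ^ (2*m) + (S:ℂ)^(2*m)) * (t⁻¹ ^ (2*m) + (S:ℂ)^(2*m)))
          / ((S:ℂ)^(2*m) * ((S:ℂ) ^ (2 * m) - ((S:ℂ))⁻¹ ^ (2 * m))) := by
    rw [eq_div_iff (mul_ne_zero (pow_ne_zero _ hS0) hAc)]
    linear_combination (((S:ℂ)^(2*m) + ((S:ℂ))⁻¹^(2*m) + t^(2*m) + t⁻¹^(2*m)) * (S:ℂ)^(2*m)) * rc
      + rA - ru
  rw [hE, one_div_div]
  have hpow1 : t^(2*m) = t^(2*m-1)*t := by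
    rw [← pow_succ]
    congr 1
    omega
  have hpow2 : t⁻¹^(2*m) = t⁻¹^(2*m-1)*t⁻¹ := by
    rw [← pow_succ]
    congr 1
    omega
  have e1 : t * (-(2 * (m:ℂ)) * t ^ (2 * m - 1) / (t ^ (2 * m) + (S:ℂ) ^ (2 * m)))
      = -(2*(m:ℂ)) * (t^(2*m) * (t^(2*m) + (S:ℂ)^(2*m))⁻¹) := by
    rw [div_eq_mul_inv, hpow1]
    ring
  have e2 : t⁻¹ * (-(2 * (m:ℂ)) * t⁻¹ ^ (2 * m - 1) / (t⁻¹ ^ (2 * m) + (S:ℂ) ^ (2 * m)))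
      = -(2*(m:ℂ)) * (t⁻¹^(2*m) * (t⁻¹^(2*m) + (S:ℂ)^(2*m))⁻¹) := by
    rw [div_eq_mul_inv, hpow2]
    ring
  rw [e1, e2]
  have hgen : ∀ X Y : ℂ, (1/(2*(m:ℂ))) * (2*(m:ℂ)*1 + -(2*(m:ℂ))*X + -(2*(m:ℂ))*Y)
      = 1 - X - Y := by
    intro X Y
    field_simp
    ring
  rw [hgen]
  rw [eq_div_iff (mul_ne_zero hD1 hD2)]
  linear_combination (-(t^(2*m) * (t⁻¹^(2*m) + (S:ℂ)^(2*m)))) * r1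
    + (-(t⁻¹^(2*m) * (t^(2*m) + (S:ℂ)^(2*m)))) * r2 + rA - ru
end

section
/- Each mapped trapezoid node is a zero of the Chebyshev-filter denominator: for every j = 1,…,2m one has α + β · T_{2m}(((S + S^{-1})/2) z_j) = 0, where z_j = (S e^{iθ_j} + S^{-1} e^{-iθ_j})/(S + S^{-1}) and θ_j = π(j − 1/2)/m. -/
open Polynomial

/-- **Mapped trapezoid nodes are zeros of the Chebyshev-filter denominator**
(Güttel–Polizzi–Tang–Viaud, proof of Lemma 3.2): for every `j = 1,…,2m`,
`α + β T_{2m}(((S+S⁻¹)/2) z_j) = 0`. -/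
theorem trapezoid_nodes_zero_of_chebyshev_denominator
    (m : ℕ) (hm : 0 < m) (S : ℝ) (hS : 1 < S)
    (θ : Fin (2 * m) → ℝ)
    (hθ : ∀ j, θ j = Real.pi * (2 * (j : ℝ) + 1) / (2 * m))
    (zn : Fin (2 * m) → ℂ)
    (hzn : ∀ j, zn j =
      ((S : ℂ) * Complex.exp (Complex.I * (θ j : ℂ)) +
        (S : ℂ)⁻¹ * Complex.exp (-(Complex.I * (θ j : ℂ)))) / ((S : ℂ) + (S : ℂ)⁻¹))
    (α β : ℝ)
    (hα : α = (S ^ (2 * m) + S⁻¹ ^ (2 * m)) / (S ^ (2 * m) - S⁻¹ ^ (2 * m)))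
    (hβ : β = 2 / (S ^ (2 * m) - S⁻¹ ^ (2 * m))) :
    ∀ j : Fin (2 * m),
      (α : ℂ) + (β : ℂ) *
        (Polynomial.Chebyshev.T ℂ (2 * m)).eval ((((S : ℂ) + (S : ℂ)⁻¹) / 2) * zn j) = 0 := by
  intro j
  have hS0 : (0 : ℝ) < S := lt_trans one_pos hS
  have hSne : (S : ℂ) ≠ 0 := by exact_mod_cast hS0.ne'
  have hsum_pos : (0 : ℝ) < S + S⁻¹ := by positivity
  have hsum_ne : ((S : ℂ) + (S : ℂ)⁻¹) ≠ 0 := by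
    have : ((S : ℂ) + (S : ℂ)⁻¹) = ((S + S⁻¹ : ℝ) : ℂ) := by push_cast; ring
    rw [this]
    exact_mod_cast hsum_pos.ne'
  set L : ℂ := (Real.log S : ℂ) with hL
  have hexpL : Complex.exp L = (S : ℂ) := by
    rw [hL, ← Complex.ofReal_exp, Real.exp_log hS0]
  have hexpnegL : Complex.exp (-L) = (S : ℂ)⁻¹ := by
    rw [Complex.exp_neg, hexpL]
  -- general computation of cos (n * (t - I L))
  have key : ∀ (n : ℕ) (t : ℂ), Complex.cos ((n : ℂ) * (t - Complex.I * L))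
      = (Complex.exp (Complex.I * ((n : ℂ) * t)) * (S : ℂ) ^ n
        + Complex.exp (-(Complex.I * ((n : ℂ) * t))) * ((S : ℂ)⁻¹) ^ n) / 2 := by
    intro n t
    rw [Complex.cos]
    have a1 : (n : ℂ) * (t - Complex.I * L) * Complex.I
        = Complex.I * ((n : ℂ) * t) + (n : ℂ) * L := by
      ring_nf; rw [Complex.I_sq]; ring
    have a2 : -((n : ℂ) * (t - Complex.I * L)) * Complex.I
        = -(Complex.I * ((n : ℂ) * t)) + -((n : ℂ) * L) := by
      rw [neg_mul, a1]; ring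
    have e5 : Complex.exp ((n : ℂ) * L) = (S : ℂ) ^ n := by
      rw [Complex.exp_nat_mul, hexpL]
    have e6 : Complex.exp (-((n : ℂ) * L)) = ((S : ℂ)⁻¹) ^ n := by
      rw [Complex.exp_neg, e5, inv_pow]
    rw [a1, a2, Complex.exp_add, Complex.exp_add, e5, e6]
  -- the evaluation point equals cos (θ j - I log S)
  have hpt : (((S : ℂ) + (S : ℂ)⁻¹) / 2) * zn j = Complex.cos ((θ j : ℂ) - Complex.I * L) := by
    have h1 : Complex.cos ((θ j : ℂ) - Complex.I * L)
        = Complex.cos (((1 : ℕ) : ℂ) * ((θ j : ℂ) - Complex.I * L)) := by norm_num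
    rw [hzn j, h1, key 1 (θ j : ℂ)]
    have hA : ∀ a b : ℂ, a ≠ 0 → a / 2 * (b / a) = b / 2 := by
      intro a b ha; field_simp
    rw [hA _ _ hsum_ne]
    norm_num
    ring
  rw [hpt, Polynomial.Chebyshev.T_complex_cos]
  have hcast : ((2 * (m : ℤ) : ℤ) : ℂ) = ((2 * m : ℕ) : ℂ) := by push_cast; ring
  rw [hcast, key (2 * m) (θ j : ℂ)]
  -- exp (I * (2m θ_j)) = -1
  have hexp1 : Complex.exp (Complex.I * (((2 * m : ℕ) : ℂ) * (θ j : ℂ))) = -1 := by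
    have hm2 : ((2 * m : ℕ) : ℂ) ≠ 0 := by
      exact_mod_cast (by omega : (2 * m : ℕ) ≠ 0)
    have hmθ : ((2 * m : ℕ) : ℂ) * (θ j : ℂ) = Real.pi * (2 * (j : ℝ) + 1) := by
      rw [hθ j]
      push_cast
      push_cast at hm2
      field_simp
      exact mul_div_cancel_left₀ _ (by exact_mod_cast hm.ne')
    rw [hmθ]
    have : Complex.I * ((Real.pi : ℂ) * (2 * (j : ℝ) + 1))
        = ((j : ℤ) : ℂ) * (2 * Real.pi * Complex.I) + Real.pi * Complex.I := by
      push_cast; ring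
    rw [this, Complex.exp_add, Complex.exp_int_mul_two_pi_mul_I, Complex.exp_pi_mul_I, one_mul]
  rw [hexp1, Complex.exp_neg, hexp1]
  have hdiff : (S : ℝ) ^ (2 * m) - S⁻¹ ^ (2 * m) ≠ 0 := by
    have h1 : (1 : ℝ) < S ^ (2 * m) := one_lt_pow₀ hS (by omega)
    have h2 : S⁻¹ ^ (2 * m) < 1 := by
      apply pow_lt_one₀ (by positivity) _ (by omega)
      rw [inv_lt_one_iff₀]; right; exact hS
    linarith
  have hdiffC : ((S : ℂ) ^ (2 * m) - (S : ℂ)⁻¹ ^ (2 * m)) ≠ 0 := by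
    have : ((S : ℂ) ^ (2 * m) - (S : ℂ)⁻¹ ^ (2 * m)) = ((S ^ (2 * m) - S⁻¹ ^ (2 * m) : ℝ) : ℂ) := by
      push_cast; ring
    rw [this]
    exact_mod_cast hdiff
  have hre : (α : ℂ) + (β : ℂ) *
      (((-1) * (S : ℂ) ^ (2 * m) + (-1 : ℂ)⁻¹ * ((S : ℂ)⁻¹) ^ (2 * m)) / 2)
      = ((α + β * (((-1) * S ^ (2 * m) + (-1) * S⁻¹ ^ (2 * m)) / 2) : ℝ) : ℂ) := by
    push_cast
    norm_num
  rw [hre]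
  have hzero : α + β * (((-1) * S ^ (2 * m) + (-1) * S⁻¹ ^ (2 * m)) / 2) = 0 := by
    rw [hα, hβ]
    have gen : ∀ a b d : ℝ, d ≠ 0 →
        (a + b) / d + 2 / d * (((-1) * a + (-1) * b) / 2) = 0 := by
      intro a b d hd
      field_simp
      ring
    exact gen _ _ _ hdiff
  rw [hzero, Complex.ofReal_zero]
end

section
/- Let q(z) = α + β · T_{2m}(((S + S^{-1})/2) z). Then for each j = 1,…,2m, the derivative of q at the mapped trapezoid node z_j satisfies q'(z_j) = β · m · (S + S^{-1}) · U_{2m−1}(((S + S^{-1})/2) z_j) = −1/w_j; equivalently, w_j · q'(z_j) = −1, so the residue of 1/q at its simple pole z_j equals −w_j. -/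
open Polynomial

/-- **Residues of the Chebyshev filter at the mapped trapezoid nodes**
(Güttel–Polizzi–Tang–Viaud, proof of Lemma 3.2).  For
`q(z) = α + β T_{2m}(((S+S⁻¹)/2) z)` and each `j`,
`q'(z_j) = β m (S+S⁻¹) U_{2m−1}(((S+S⁻¹)/2) z_j) = −1/w_j`, i.e. `w_j q'(z_j) = −1`,
so the residue of `1/q` at its simple pole `z_j` is `−w_j`. -/
theorem trapezoid_nodes_residues
    (m : ℕ) (hm : 0 < m) (S : ℝ) (hS : 1 < S)
    (θ : Fin (2 * m) → ℝ)
    (hθ : ∀ j, θ j = Real.pi * (2 * (j : ℝ) + 1) / (2 * m))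
    (zn w : Fin (2 * m) → ℂ)
    (hzn : ∀ j, zn j =
      ((S : ℂ) * Complex.exp (Complex.I * (θ j : ℂ)) +
        (S : ℂ)⁻¹ * Complex.exp (-(Complex.I * (θ j : ℂ)))) / ((S : ℂ) + (S : ℂ)⁻¹))
    (hw : ∀ j, w j =
      (1 / (2 * (m : ℂ))) *
        ((S : ℂ) * Complex.exp (Complex.I * (θ j : ℂ)) -
          (S : ℂ)⁻¹ * Complex.exp (-(Complex.I * (θ j : ℂ)))) / ((S : ℂ) + (S : ℂ)⁻¹))
    (α β : ℝ)
    (hα : α = (S ^ (2 * m) + S⁻¹ ^ (2 * m)) / (S ^ (2 * m) - S⁻¹ ^ (2 * m)))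
    (hβ : β = 2 / (S ^ (2 * m) - S⁻¹ ^ (2 * m)))
    (q : ℂ → ℂ)
    (hq : ∀ z, q z = (α : ℂ) + (β : ℂ) *
      (Polynomial.Chebyshev.T ℂ (2 * m)).eval ((((S : ℂ) + (S : ℂ)⁻¹) / 2) * z)) :
    ∀ j : Fin (2 * m),
      deriv q (zn j)
          = (β : ℂ) * (m : ℂ) * ((S : ℂ) + (S : ℂ)⁻¹) *
            (Polynomial.Chebyshev.U ℂ (2 * (m : ℤ) - 1)).eval
              ((((S : ℂ) + (S : ℂ)⁻¹) / 2) * zn j) ∧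
        deriv q (zn j) = -1 / w j ∧
        w j * deriv q (zn j) = -1 := by
  intro j
  have hznj := hzn j
  have hwj := hw j
  rw [Complex.exp_neg] at hznj hwj
  set t : ℂ := (S : ℂ) with ht
  set u : ℂ := Complex.exp (Complex.I * (θ j : ℂ)) with hu
  set c : ℂ := (t + t⁻¹) / 2 with hc
  have hS0 : (0 : ℝ) < S := lt_trans one_pos hS
  have ht0 : t ≠ 0 := by
    rw [ht]; exact_mod_cast hS0.ne'
  have hu0 : u ≠ 0 := Complex.exp_ne_zero _
  have hm0 : (m : ℂ) ≠ 0 := by exact_mod_cast hm.ne'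
  have htt : t + t⁻¹ ≠ 0 := by
    have h1 : (0:ℝ) < S + S⁻¹ := by positivity
    have h2 : ((S + S⁻¹ : ℝ) : ℂ) ≠ 0 := by exact_mod_cast h1.ne'
    rw [ht]; push_cast at h2; exact h2
  have habsu : ‖u‖ = 1 := by
    rw [hu, Complex.norm_exp]; simp
  have hI : Complex.I * Complex.I = -1 := Complex.I_mul_I
  -- φ with cos φ = c * zn j
  set φ : ℂ := (θ j : ℂ) - Complex.I * (Real.log S : ℂ) with hφ
  have hexplog : Complex.exp ((Real.log S : ℝ) : ℂ) = t := by
    rw [← Complex.ofReal_exp, Real.exp_log hS0]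
  have hexpφ : Complex.exp (φ * Complex.I) = t * u := by
    have h : φ * Complex.I = ((Real.log S : ℝ) : ℂ) + Complex.I * (θ j : ℂ) := by
      rw [hφ]; linear_combination (-(Real.log S : ℂ)) * hI
    rw [h, Complex.exp_add, hexplog, hu]
  have hexpφ' : Complex.exp (-φ * Complex.I) = t⁻¹ * u⁻¹ := by
    rw [neg_mul, Complex.exp_neg, hexpφ, mul_inv]
  have hcos : 2 * Complex.cos φ = t * u + t⁻¹ * u⁻¹ := by
    rw [Complex.two_cos, hexpφ, hexpφ']
  have hsin : 2 * Complex.sin φ = (t⁻¹ * u⁻¹ - t * u) * Complex.I := by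
    rw [Complex.two_sin, hexpφ, hexpφ']
  have hczn : c * zn j = Complex.cos φ := by
    rw [hznj, hc, div_mul_div_comm, mul_comm (2:ℂ) (t + t⁻¹), mul_div_mul_left _ _ htt]
    linear_combination -hcos / 2
  -- sin φ ≠ 0
  have hne : t * u ≠ t⁻¹ * u⁻¹ := by
    intro h
    have h2 := congrArg (fun z : ℂ => ‖z‖) h
    simp only [norm_mul, norm_inv, habsu] at h2
    have h3 : ‖t‖ = S := by
      rw [ht, Complex.norm_real, Real.norm_eq_abs, abs_of_pos hS0]
    rw [h3] at h2
    simp only [inv_one, mul_one] at h2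
    have h4 : S * S = 1 := by
      field_simp at h2
      nlinarith [h2]
    nlinarith [h4]
  have hsin0 : Complex.sin φ ≠ 0 := by
    intro h0
    apply hne
    have h1 : (t⁻¹ * u⁻¹ - t * u) * Complex.I = 0 := by rw [← hsin, h0, mul_zero]
    have h2 := (mul_eq_zero.mp h1).resolve_right Complex.I_ne_zero
    linear_combination -h2
  -- u ^ (2m) = -1
  have hkey : ((2 * m : ℕ) : ℂ) * (Complex.I * (θ j : ℂ)) =
      ((2 * (j : ℕ) + 1 : ℕ) : ℂ) * ((Real.pi : ℂ) * Complex.I) := by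
    have hmR : (m : ℝ) ≠ 0 := by exact_mod_cast hm.ne'
    have h1 : (2 * m : ℝ) * θ j = (2 * (j : ℕ) + 1 : ℝ) * Real.pi := by
      rw [hθ j]; field_simp
    have h2 : ((2 * m : ℕ) : ℂ) * (θ j : ℂ) = ((2 * (j : ℕ) + 1 : ℕ) : ℂ) * (Real.pi : ℂ) := by
      exact_mod_cast congrArg Complex.ofReal h1
    linear_combination Complex.I * h2
  have hu2m : u ^ (2 * m) = -1 := by
    rw [hu, ← Complex.exp_nat_mul, hkey, Complex.exp_nat_mul, Complex.exp_pi_mul_I]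
    exact Odd.neg_one_pow ⟨(j : ℕ), by ring⟩
  -- sin (2m φ)
  have hexp2m : Complex.exp (((2 * m : ℕ) : ℂ) * φ * Complex.I) = -(t ^ (2 * m)) := by
    rw [show ((2 * m : ℕ) : ℂ) * φ * Complex.I = ((2 * m : ℕ) : ℂ) * (φ * Complex.I) by ring,
      Complex.exp_nat_mul, hexpφ, mul_pow, hu2m, mul_neg_one]
  have hexp2m' : Complex.exp (-(((2 * m : ℕ) : ℂ) * φ) * Complex.I) = -(t⁻¹ ^ (2 * m)) := by
    rw [neg_mul, Complex.exp_neg, hexp2m, inv_neg, inv_pow]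
  have hsin2m : 2 * Complex.sin (((2 * m : ℕ) : ℂ) * φ) =
      (t ^ (2 * m) - t⁻¹ ^ (2 * m)) * Complex.I := by
    rw [Complex.two_sin, hexp2m, hexp2m']; ring
  -- U evaluation
  set E : ℂ := (Polynomial.Chebyshev.U ℂ (2 * (m : ℤ) - 1)).eval (c * zn j) with hE
  have hUs : E * Complex.sin φ = Complex.sin (((2 * m : ℕ) : ℂ) * φ) := by
    have h := Polynomial.Chebyshev.U_complex_cos φ (2 * (m : ℤ) - 1)
    rw [hE, hczn, h]
    congr 1
    push_cast
    ring
  have h1 : t * u - t⁻¹ * u⁻¹ = 2 * Complex.I * Complex.sin φ := by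
    linear_combination (-Complex.I) * hsin + (t * u - t⁻¹ * u⁻¹) * hI
  have h2 : 2 * Complex.I * Complex.sin (((2 * m : ℕ) : ℂ) * φ) =
      -(t ^ (2 * m) - t⁻¹ ^ (2 * m)) := by
    linear_combination Complex.I * hsin2m + (t ^ (2 * m) - t⁻¹ ^ (2 * m)) * hI
  have hEeq : E * (t * u - t⁻¹ * u⁻¹) = -(t ^ (2 * m) - t⁻¹ ^ (2 * m)) := by
    linear_combination E * h1 + 2 * Complex.I * hUs + h2
  -- β * (t^2m - t⁻¹^2m) = 2
  have hpow1 : 1 < S ^ (2 * m) := one_lt_pow₀ hS (by omega)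
  have hpow2 : S⁻¹ ^ (2 * m) < 1 :=
    pow_lt_one₀ (by positivity) (inv_lt_one_of_one_lt₀ hS) (by omega)
  have hden : S ^ (2 * m) - S⁻¹ ^ (2 * m) ≠ 0 := by nlinarith
  have hβR : β * (S ^ (2 * m) - S⁻¹ ^ (2 * m)) = 2 := by
    rw [hβ, div_mul_cancel₀ _ hden]
  have hβC : (β : ℂ) * (t ^ (2 * m) - t⁻¹ ^ (2 * m)) = 2 := by
    have h := congrArg Complex.ofReal hβR
    push_cast at h
    rw [ht]; push_cast; exact h
  -- derivative of q
  have hD : deriv q (zn j) =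
      (β : ℂ) * ((derivative (Polynomial.Chebyshev.T ℂ (2 * m))).eval (c * zn j) * c) := by
    have hfun : q = fun z => (α : ℂ) +
        (β : ℂ) * (Polynomial.Chebyshev.T ℂ (2 * m)).eval (c * z) := funext fun z => hq z
    rw [hfun]
    have hlin : HasDerivAt (fun z : ℂ => c * z) c (zn j) := by
      simpa using (hasDerivAt_id (zn j)).const_mul c
    have hcomp := ((Polynomial.Chebyshev.T ℂ (2 * m)).hasDerivAt (c * zn j)).comp (zn j) hlin
    exact ((hcomp.const_mul (β : ℂ)).const_add (α : ℂ)).deriv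
  rw [Polynomial.Chebyshev.T_derivative_eq_U] at hD
  have hD1 : deriv q (zn j) = (β : ℂ) * (m : ℂ) * (t + t⁻¹) * E := by
    rw [hD]
    simp only [Polynomial.eval_mul, Polynomial.eval_intCast]
    rw [← hE, hc]
    push_cast
    ring
  have key : (t * u - t⁻¹ * u⁻¹) * ((β : ℂ) * E) = -2 := by
    calc (t * u - t⁻¹ * u⁻¹) * ((β : ℂ) * E)
        = E * (t * u - t⁻¹ * u⁻¹) * (β : ℂ) := by ring
      _ = -(t ^ (2 * m) - t⁻¹ ^ (2 * m)) * (β : ℂ) := by rw [hEeq]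
      _ = -((β : ℂ) * (t ^ (2 * m) - t⁻¹ ^ (2 * m))) := by ring
      _ = -2 := by rw [hβC]
  have hg3 : w j * deriv q (zn j) = -1 := by
    rw [hwj, hD1]
    calc 1 / (2 * (m : ℂ)) * (t * u - t⁻¹ * u⁻¹) / (t + t⁻¹) *
          ((β : ℂ) * (m : ℂ) * (t + t⁻¹) * E)
        = ((t * u - t⁻¹ * u⁻¹) * ((β : ℂ) * E)) * ((m : ℂ) / (m : ℂ)) *
            ((t + t⁻¹) / (t + t⁻¹)) / 2 := by ring
      _ = -1 := by rw [div_self hm0, div_self htt, key]; norm_num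
  have hw0 : w j ≠ 0 := by
    intro h0
    rw [h0, zero_mul] at hg3
    exact absurd hg3 (by norm_num)
  refine ⟨by rw [hD1, hE], ?_, hg3⟩
  rw [eq_div_iff hw0]
  linear_combination hg3
end

section
/- The trapezoid-rule rational function takes at the interval endpoints ±1 the value r_m^{(T)}(1) = r_m^{(T)}(−1) = (S^{2m} − S^{-2m})/(2(S^{2m} + S^{-2m})), and consequently lim_{S → ∞} r_m^{(T)}(±1) = 1/2. -/
open Complex Finset

lemma pow_root_aux (n : ℕ) (hn : 0 < n) (k : ℕ) :
    Complex.exp (Complex.I * (Real.pi * (2 * (k:ℂ) + 1) / n)) ^ n = -1 := by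
  rw [← Complex.exp_nat_mul]
  have hn' : (n:ℂ) ≠ 0 := Nat.cast_ne_zero.mpr hn.ne'
  have h1 : (n:ℂ) * (Complex.I * (Real.pi * (2*(k:ℂ)+1)/n))
      = ((2*k+1 : ℕ):ℂ) * (Real.pi * Complex.I) := by
    push_cast; field_simp
  rw [h1, Complex.exp_nat_mul, Complex.exp_pi_mul_I]
  exact Odd.neg_one_pow ⟨k, by ring⟩

-- inner sum: ∑_j (e j)^i = 0 for 0 < i < n
lemma inner_sum_zero (n : ℕ) (hn : 0 < n) (i : ℕ) (hi0 : 0 < i) (hin : i < n) :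
    ∑ j : Fin n, Complex.exp (Complex.I * (Real.pi * (2 * (j:ℂ) + 1) / n)) ^ i = 0 := by
  have hn' : (n:ℂ) ≠ 0 := Nat.cast_ne_zero.mpr hn.ne'
  set q : ℂ := Complex.exp (2 * Real.pi * Complex.I * i / n) with hq
  have hterm : ∀ j : Fin n,
      Complex.exp (Complex.I * (Real.pi * (2 * (j:ℂ) + 1) / n)) ^ i
        = Complex.exp (Real.pi * Complex.I * i / n) * q ^ (j : ℕ) := by
    intro j
    rw [← Complex.exp_nat_mul, hq, ← Complex.exp_nat_mul, ← Complex.exp_add]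
    congr 1
    field_simp
    ring
  rw [Finset.sum_congr rfl (fun j _ => hterm j), ← Finset.mul_sum]
  have hq1 : q ≠ 1 := by
    rw [hq, Ne, Complex.exp_eq_one_iff]
    rintro ⟨k, hk⟩
    have h2πI : (2:ℂ) * Real.pi * Complex.I ≠ 0 := by
      simp [Real.pi_ne_zero, Complex.I_ne_zero]
    have : (i:ℂ) = (k:ℂ) * n := by
      field_simp at hk
      skip
      linear_combination hk
    have : (i:ℤ) = k * n := by exact_mod_cast this
    rcases le_or_gt k 0 with h | h
    · have : (i:ℤ) ≤ 0 := this ▸ mul_nonpos_of_nonpos_of_nonneg h (by positivity)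
      omega
    · have : (n:ℤ) ≤ i := by
        rw [this]; nlinarith [h, (by exact_mod_cast hn : (0:ℤ) < n)]
      omega
  have hqn : q ^ n = 1 := by
    rw [hq, ← Complex.exp_nat_mul]
    have : (n:ℂ) * (2 * Real.pi * Complex.I * i / n) = (i:ℕ) * (2 * Real.pi * Complex.I) := by
      field_simp
    rw [this, Complex.exp_nat_mul, Complex.exp_two_pi_mul_I, one_pow]
  have : ∑ j : Fin n, q ^ (j:ℕ) = 0 := by
    rw [Fin.sum_univ_eq_sum_range, geom_sum_eq hq1, hqn, sub_self, zero_div]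
  rw [this, mul_zero]

lemma sum_inv_roots (n : ℕ) (hn : 0 < n) (e : Fin n → ℂ)
    (he : ∀ j, e j = Complex.exp (Complex.I * (Real.pi * (2 * (j:ℂ) + 1) / n)))
    (x : ℂ) (hx : x ^ n ≠ -1) :
    ∑ j, 1 / (e j - x) = -(n:ℂ) * x ^ (n - 1) / (x ^ n + 1) := by
  have hen : ∀ j : Fin n, e j ^ n = -1 := fun j => by rw [he j]; exact pow_root_aux n hn j
  have hx1 : x ^ n + 1 ≠ 0 := by
    intro h; exact hx (by linear_combination h)
  have hterm : ∀ j : Fin n, 1 / (e j - x)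
      = -(∑ i ∈ Finset.range n, e j ^ i * x ^ (n - 1 - i)) / (x ^ n + 1) := by
    intro j
    have hex : e j - x ≠ 0 := by
      intro h
      rw [sub_eq_zero] at h
      exact hx (by rw [← h, hen j])
    have hfac := geom_sum₂_mul (e j) x n
    rw [hen j] at hfac
    rw [div_eq_div_iff hex hx1]
    linear_combination hfac
  rw [Finset.sum_congr rfl (fun j _ => hterm j), ← Finset.sum_div]
  congr 1
  have hswap : ∑ j : Fin n, -∑ i ∈ Finset.range n, e j ^ i * x ^ (n - 1 - i)
      = -∑ i ∈ Finset.range n, (∑ j : Fin n, e j ^ i) * x ^ (n - 1 - i) := by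
    rw [Finset.sum_neg_distrib, neg_inj, Finset.sum_comm]
    exact Finset.sum_congr rfl fun i _ => (Finset.sum_mul ..).symm
  rw [hswap]
  have hval : ∀ i ∈ Finset.range n, (∑ j : Fin n, e j ^ i) * x ^ (n - 1 - i)
      = if i = 0 then (n:ℂ) * x ^ (n-1) else 0 := by
    intro i hi
    rcases Nat.eq_zero_or_pos i with h0 | h0
    · subst h0
      simp
    · rw [if_neg h0.ne']
      have := inner_sum_zero n hn i h0 (Finset.mem_range.mp hi)
      rw [Finset.sum_congr rfl (fun j _ => by rw [he j]), this, zero_mul]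
  rw [Finset.sum_congr rfl hval, Finset.sum_ite_eq' (Finset.range n) 0
    (fun _ => (n:ℂ) * x ^ (n-1)), if_pos (Finset.mem_range.mpr hn)]
  ring
lemma per_term_pos (M Sc T E : ℂ) (hM : M ≠ 0) (hT : Sc * T = 1)
    (hSS : Sc + T ≠ 0) (hE0 : E ≠ 0) (hE1 : E - 1 ≠ 0) (hEc : E - T ^ 2 ≠ 0) :
    (1 / M * (Sc * E - T * E⁻¹) / (Sc + T)) /
      ((Sc * E + T * E⁻¹) / (Sc + T) - 1)
    = 1 / M + (1 / M) * (1 / (E - 1)) + ((T ^ 2) / M) * (1 / (E - T ^ 2)) := by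
  have hS0 : Sc ≠ 0 := left_ne_zero_of_mul_eq_one hT
  have hd : (Sc * E + T * E⁻¹) / (Sc + T) - 1
      = Sc * (E - 1) * (E - T ^ 2) / (E * (Sc + T)) := by
    rw [div_sub_one hSS, div_eq_div_iff hSS (mul_ne_zero hE0 hSS)]
    field_simp
    linear_combination T*(E-1)*hT
  have hD : Sc * (E - 1) * (E - T ^ 2) / (E * (Sc + T)) ≠ 0 :=
    div_ne_zero (mul_ne_zero (mul_ne_zero hS0 hE1) hEc) (mul_ne_zero hE0 hSS)
  rw [hd, div_eq_iff hD]
  field_simp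
  linear_combination T*hT

lemma per_term_neg (M Sc T E : ℂ) (hM : M ≠ 0) (hT : Sc * T = 1)
    (hSS : Sc + T ≠ 0) (hE0 : E ≠ 0) (hE1 : E + 1 ≠ 0) (hEc : E + T ^ 2 ≠ 0) :
    (1 / M * (Sc * E - T * E⁻¹) / (Sc + T)) /
      ((Sc * E + T * E⁻¹) / (Sc + T) + 1)
    = 1 / M - (1 / M) * (1 / (E + 1)) - ((T ^ 2) / M) * (1 / (E + T ^ 2)) := by
  have hS0 : Sc ≠ 0 := left_ne_zero_of_mul_eq_one hT
  have hd : (Sc * E + T * E⁻¹) / (Sc + T) + 1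
      = Sc * (E + 1) * (E + T ^ 2) / (E * (Sc + T)) := by
    rw [div_add_one hSS, div_eq_div_iff hSS (mul_ne_zero hE0 hSS)]
    field_simp
    linear_combination (-(1+E)*T)*hT
  have hD : Sc * (E + 1) * (E + T ^ 2) / (E * (Sc + T)) ≠ 0 :=
    div_ne_zero (mul_ne_zero (mul_ne_zero hS0 hE1) hEc) (mul_ne_zero hE0 hSS)
  rw [hd, div_eq_iff hD]
  field_simp
  linear_combination T*hT

lemma half_sub_frac (P Q : ℂ) (hPQ : P * Q = 1) (h1 : Q * Q + 1 ≠ 0) (h2 : P + Q ≠ 0) :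
    1 - 1/2 - (Q * Q) / (Q * Q + 1) = (P - Q) / (2 * (P + Q)) := by
  have h2' : (2:ℂ) * (P + Q) ≠ 0 := mul_ne_zero two_ne_zero h2
  have h1' : Q^2+1 ≠ 0 := by rwa [sq]
  field_simp
  linear_combination (-2*Q) * hPQ




/-- **Value of the trapezoid-rule filter at the interval endpoints**
(Güttel–Polizzi–Tang–Viaud, Remark 3.3 / Lemma 3.2):
`r_m^{(T)}(±1) = (S^{2m} − S^{−2m})/(2(S^{2m} + S^{−2m}))`, and consequently
`r_m^{(T)}(±1) → 1/2` as `S → ∞`. -/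
theorem trapezoid_rule_value_at_endpoints
    (m : ℕ) (hm : 0 < m) (S : ℝ) (hS : 1 < S)
    (θ : Fin (2 * m) → ℝ)
    (hθ : ∀ j, θ j = Real.pi * (2 * (j : ℝ) + 1) / (2 * m))
    (zn w : Fin (2 * m) → ℂ)
    (hzn : ∀ j, zn j =
      ((S : ℂ) * Complex.exp (Complex.I * (θ j : ℂ)) +
        (S : ℂ)⁻¹ * Complex.exp (-(Complex.I * (θ j : ℂ)))) / ((S : ℂ) + (S : ℂ)⁻¹))
    (hw : ∀ j, w j =
      (1 / (2 * (m : ℂ))) *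
        ((S : ℂ) * Complex.exp (Complex.I * (θ j : ℂ)) -
          (S : ℂ)⁻¹ * Complex.exp (-(Complex.I * (θ j : ℂ)))) / ((S : ℂ) + (S : ℂ)⁻¹)) :
    (∑ j, w j / (zn j - 1)
        = (((S ^ (2 * m) - S⁻¹ ^ (2 * m)) / (2 * (S ^ (2 * m) + S⁻¹ ^ (2 * m))) : ℝ) : ℂ)) ∧
      (∑ j, w j / (zn j - (-1))
        = (((S ^ (2 * m) - S⁻¹ ^ (2 * m)) / (2 * (S ^ (2 * m) + S⁻¹ ^ (2 * m))) : ℝ) : ℂ)) ∧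
      Filter.Tendsto
        (fun s : ℝ => (s ^ (2 * m) - s⁻¹ ^ (2 * m)) / (2 * (s ^ (2 * m) + s⁻¹ ^ (2 * m))))
        Filter.atTop (nhds (1 / 2)) := by
  have hn : 0 < 2 * m := by omega
  have hS0r : S ≠ 0 := by positivity
  have hS0 : (S:ℂ) ≠ 0 := Complex.ofReal_ne_zero.mpr hS0r
  set e : Fin (2 * m) → ℂ := fun j => Complex.exp (Complex.I * (θ j : ℂ)) with he_def
  have he : ∀ j, e j = Complex.exp (Complex.I * (Real.pi * (2 * (j:ℂ) + 1) / ((2*m : ℕ) : ℂ))) := by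
    intro j
    show Complex.exp (Complex.I * (θ j : ℂ)) = _
    rw [hθ j]
    congr 1
    push_cast
    ring
  have hen : ∀ j : Fin (2 * m), e j ^ (2*m) = -1 := fun j => by
    rw [he j]; exact pow_root_aux (2*m) hn j
  set c : ℂ := (S:ℂ)⁻¹ ^ 2 with hc_def
  have hcn : c ^ (2*m) = (((S⁻¹ ^ 2) ^ (2*m) : ℝ) : ℂ) := by rw [hc_def]; push_cast; ring
  have h1n : (1:ℂ) ^ (2*m) ≠ -1 := by norm_num
  have hcn' : c ^ (2*m) ≠ -1 := by
    rw [hcn]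
    intro h
    have h2 : ((S⁻¹ ^ 2) ^ (2*m) : ℝ) = -1 := by exact_mod_cast h
    have : (0:ℝ) < (S⁻¹ ^ 2) ^ (2*m) := by positivity
    linarith
  have hm1n : (-1:ℂ) ^ (2*m) ≠ -1 := by
    rw [Even.neg_one_pow ⟨m, by omega⟩]; norm_num
  have hmcn : (-c) ^ (2*m) ≠ -1 := by
    rw [Even.neg_pow ⟨m, by omega⟩]; exact hcn'
  have hSSr : (0:ℝ) < S + S⁻¹ := by positivity
  have hSS : (S:ℂ) + (S:ℂ)⁻¹ ≠ 0 := by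
    have h := Complex.ofReal_ne_zero.mpr hSSr.ne'
    push_cast at h
    exact h
  have hm0 : (2 * (m:ℂ)) ≠ 0 := by
    simp [Nat.cast_ne_zero, hm.ne']
  have hnC : (((2*m):ℕ):ℂ) = 2 * (m:ℂ) := by push_cast; ring
  have hne : ∀ (j : Fin (2 * m)) (x : ℂ), x ^ (2*m) ≠ -1 → e j - x ≠ 0 := by
    intro j x hx h
    rw [sub_eq_zero] at h
    exact hx (by rw [← h, hen j])
  have hE0 : ∀ j : Fin (2 * m), e j ≠ 0 := fun j => Complex.exp_ne_zero _
  have hST : (S:ℂ) * (S:ℂ)⁻¹ = 1 := mul_inv_cancel₀ hS0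
  have habs1 : ∀ j : Fin (2 * m), w j / (zn j - 1)
      = 1/(2*(m:ℂ)) + (1/(2*(m:ℂ))) * (1/(e j - 1)) + (c/(2*(m:ℂ))) * (1/(e j - c)) := by
    intro j
    rw [hw j, hzn j, Complex.exp_neg]
    exact per_term_pos (2*(m:ℂ)) (S:ℂ) (S:ℂ)⁻¹ (e j) hm0 hST hSS (hE0 j)
      (hne j 1 h1n) (hne j c hcn')
  have habs2 : ∀ j : Fin (2 * m), w j / (zn j - (-1))
      = 1/(2*(m:ℂ)) - (1/(2*(m:ℂ))) * (1/(e j + 1)) - (c/(2*(m:ℂ))) * (1/(e j + c)) := by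
    intro j
    rw [hw j, hzn j, Complex.exp_neg, sub_neg_eq_add]
    have h1 : e j + 1 ≠ 0 := by
      have := hne j (-1) hm1n; rwa [sub_neg_eq_add] at this
    have h2 : e j + c ≠ 0 := by
      have := hne j (-c) hmcn; rwa [sub_neg_eq_add] at this
    exact per_term_neg (2*(m:ℂ)) (S:ℂ) (S:ℂ)⁻¹ (e j) hm0 hST hSS (hE0 j) h1 h2
  have S1 := sum_inv_roots (2*m) hn e he 1 h1n
  have Sc := sum_inv_roots (2*m) hn e he c hcn'
  have Sm1 := sum_inv_roots (2*m) hn e he (-1) hm1n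
  have Smc := sum_inv_roots (2*m) hn e he (-c) hmcn
  simp only [sub_neg_eq_add] at Sm1 Smc
  set P : ℂ := (S:ℂ) ^ (2*m) with hP_def
  set Q : ℂ := (S:ℂ)⁻¹ ^ (2*m) with hQ_def
  have hPQ : P * Q = 1 := by rw [hP_def, hQ_def, ← mul_pow, hST, one_pow]
  have hu : c ^ (2*m) = Q * Q := by
    rw [hc_def, hQ_def, ← pow_mul, ← pow_add]
    congr 1
    ring
  have hQQ1 : Q * Q + 1 ≠ 0 := by
    rw [← hu]
    intro h
    exact hcn' (by linear_combination h)
  have hPQs : P + Q ≠ 0 := by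
    rw [hP_def, hQ_def]
    have hApos : (0:ℝ) < S ^ (2*m) + S⁻¹ ^ (2*m) := by positivity
    have h := Complex.ofReal_ne_zero.mpr hApos.ne'
    push_cast at h
    exact h
  have hcpow : c * c ^ (2*m - 1) = Q * Q := by
    rw [← hu, ← pow_succ']
    congr 1
    omega
  have hRHS : (((S ^ (2 * m) - S⁻¹ ^ (2 * m)) / (2 * (S ^ (2 * m) + S⁻¹ ^ (2 * m))) : ℝ) : ℂ)
      = (P - Q) / (2 * (P + Q)) := by
    rw [hP_def, hQ_def]
    push_cast
    ring
  have hmon : ((-1:ℂ)) ^ (2*m - 1) = -1 := Odd.neg_one_pow ⟨m-1, by omega⟩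
  have hmev : ((-1:ℂ)) ^ (2*m) = 1 := Even.neg_one_pow ⟨m, by omega⟩
  have hmcp : ((-c:ℂ)) ^ (2*m - 1) = -(c ^ (2*m - 1)) := Odd.neg_pow ⟨m-1, by omega⟩ c
  have hmce : ((-c:ℂ)) ^ (2*m) = c ^ (2*m) := Even.neg_pow ⟨m, by omega⟩ c
  rw [hmon, hmev] at Sm1
  rw [hmcp, hmce, hu] at Smc
  rw [hu] at Sc
  clear_value c P Q
  refine ⟨?_, ?_, ?_⟩
  · rw [Finset.sum_congr rfl (fun j _ => habs1 j), Finset.sum_add_distrib, Finset.sum_add_distrib,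
      Finset.sum_const, ← Finset.mul_sum, ← Finset.mul_sum, S1, Sc, hRHS]
    simp only [Finset.card_univ, Fintype.card_fin, nsmul_eq_mul, hnC, one_pow]
    have hm' : (m:ℂ) ≠ 0 := by exact_mod_cast hm.ne'
    have hQ2 : Q^2+1 ≠ 0 := by rwa [sq]
    field_simp
    linear_combination (-4*(P+Q)) * hcpow + (-4*Q) * hPQ
  · rw [Finset.sum_congr rfl (fun j _ => habs2 j), Finset.sum_sub_distrib, Finset.sum_sub_distrib,
      Finset.sum_const, ← Finset.mul_sum, ← Finset.mul_sum, Sm1, Smc, hRHS]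
    simp only [Finset.card_univ, Fintype.card_fin, nsmul_eq_mul, hnC, one_pow]
    have hm' : (m:ℂ) ≠ 0 := by exact_mod_cast hm.ne'
    have hQ2 : Q^2+1 ≠ 0 := by rwa [sq]
    field_simp
    linear_combination (-4*(P+Q)) * hcpow + (-4*Q) * hPQ
  · have hpow0 : Filter.Tendsto (fun s : ℝ => ((s^2)⁻¹)^(2*m)) Filter.atTop (nhds 0) := by
      have h1 : Filter.Tendsto (fun s : ℝ => (s^2)⁻¹) Filter.atTop (nhds 0) :=
        Filter.Tendsto.inv_tendsto_atTop (Filter.tendsto_pow_atTop two_ne_zero)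
      have h2 := h1.pow (2*m)
      rwa [zero_pow hn.ne'] at h2
    have hg : Filter.Tendsto
        (fun s : ℝ => (1 - ((s^2)⁻¹)^(2*m)) / (2 * (1 + ((s^2)⁻¹)^(2*m))))
        Filter.atTop (nhds (1/2)) := by
      have hnum : Filter.Tendsto (fun s : ℝ => 1 - ((s^2)⁻¹)^(2*m)) Filter.atTop (nhds 1) := by
        have h4 : Filter.Tendsto (fun _ : ℝ => (1:ℝ)) Filter.atTop (nhds 1) := tendsto_const_nhds
        simpa using h4.sub hpow0
      have hden : Filter.Tendsto (fun s : ℝ => 2 * (1 + ((s^2)⁻¹)^(2*m))) Filter.atTop (nhds 2) := by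
        have h4 : Filter.Tendsto (fun _ : ℝ => (1:ℝ)) Filter.atTop (nhds 1) := tendsto_const_nhds
        have h5 : Filter.Tendsto (fun _ : ℝ => (2:ℝ)) Filter.atTop (nhds 2) := tendsto_const_nhds
        simpa using h5.mul (h4.add hpow0)
      exact hnum.div hden two_ne_zero
    refine hg.congr' ?_
    filter_upwards [Filter.eventually_ge_atTop (1:ℝ)] with s hs
    have hs0 : s ≠ 0 := by linarith
    have hd1 : (0:ℝ) < 2 * (1 + ((s^2)⁻¹)^(2*m)) := by positivity
    have hd2 : (0:ℝ) < 2 * (s^(2*m) + s⁻¹^(2*m)) := by positivity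
    rw [div_eq_div_iff hd1.ne' hd2.ne']
    have hx : s ^ (2*m) * s⁻¹ ^ (2*m) = 1 := by rw [← mul_pow, mul_inv_cancel₀ hs0, one_pow]
    have ht : ((s^2)⁻¹)^(2*m) = (s⁻¹^(2*m))^2 := by ring
    rw [ht]; linear_combination (-4*s⁻¹^(2*m)) * hx
end

section
/- Choose S > 1 so that G = 2/(S + S^{-1}) (the 'natural' choice of parameter for a gap 0 < G < 1). Then for every real x with |x| ≥ 1/G one has 0 < r_m^{(T)}(x) ≤ 1/(α + β T_{2m}(G^{-2})), with equality at x = ±1/G, while for every real x with |x| ≤ G one has r_m^{(T)}(x) ≥ 1/(α + β). Consequently the worst-case convergence factor satisfies max_{|x| ≥ 1/G} r_m^{(T)}(x) / min_{|x| ≤ G} r_m^{(T)}(x) = (α + β)/(α + β T_{2m}(G^{-2})). -/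
open Polynomial Polynomial.Chebyshev in
lemma cheb_half {R : Type*} [Field R] (z : R) (hz : z ≠ 0) (y : R) (hy : 2 * y = z + z⁻¹) :
    ∀ n : ℕ, 2 * ((T R n).eval y) = z^n + (z⁻¹)^n := by
  have key : ∀ n : ℕ, 2 * ((T R n).eval y) = z^n + (z⁻¹)^n ∧
      2 * ((T R (n+1)).eval y) = z^(n+1) + (z⁻¹)^(n+1) := by
    intro n
    induction n with
    | zero =>
      constructor
      · norm_num [T_zero]
      · rw [show ((0:ℕ):ℤ)+1 = 1 by norm_num, T_one, eval_X, hy]; ring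
    | succ k ih =>
      refine ⟨ih.2, ?_⟩
      have h := T_add_two R k
      rw [show ((k+1:ℕ):ℤ)+1 = (k:ℤ)+2 by push_cast; ring, h]
      simp only [eval_sub, eval_mul, eval_X, eval_ofNat]
      have h1 := ih.1
      have h2 := ih.2
      linear_combination (2 * eval y (T R ((k:ℤ)+1))) * hy + (z + z⁻¹) * h2 - h1
        + (z^k + z⁻¹^k) * (mul_inv_cancel₀ hz)
  exact fun n => (key n).1


open Complex in
lemma sum_u_pow (m : ℕ) (hm : 0 < m) (k : ℕ) (hk1 : 1 ≤ k) (hk : k < 2*m) :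
    ∑ j : Fin (2*m), (Complex.exp (Complex.I * ((Real.pi * (2*(j:ℝ)+1) / (2*m) : ℝ) : ℂ)))^k = 0 := by
  have hmC : (m:ℂ) ≠ 0 := Nat.cast_ne_zero.2 hm.ne'
  set q : ℂ := Complex.exp (((k * Real.pi / m : ℝ) : ℂ) * Complex.I) with hq
  have hterm : ∀ j : Fin (2*m),
      (Complex.exp (Complex.I * ((Real.pi * (2*(j:ℝ)+1) / (2*m) : ℝ) : ℂ)))^k
        = Complex.exp (Complex.I * (k * Real.pi / (2*m))) * q^(j:ℕ) := by
    intro j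
    rw [hq, ← Complex.exp_nat_mul, ← Complex.exp_nat_mul, ← Complex.exp_add]
    congr 1
    push_cast
    field_simp
    ring
  rw [Finset.sum_congr rfl (fun j _ => hterm j), ← Finset.mul_sum]
  have hq1 : q ≠ 1 := by
    rw [hq, Ne, Complex.exp_eq_one_iff]
    rintro ⟨n, hn⟩
    have hn2 : ((k * Real.pi / m : ℝ) : ℂ) * Complex.I = ((n * (2 * Real.pi) : ℝ) : ℂ) * Complex.I := by
      rw [hn]; push_cast; ring
    have hn3 : (k * Real.pi / m : ℝ) = (n * (2 * Real.pi) : ℝ) :=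
      Complex.ofReal_inj.1 (mul_right_cancel₀ Complex.I_ne_zero hn2)
    have hmR : (m:ℝ) ≠ 0 := Nat.cast_ne_zero.2 hm.ne'
    have hpi := Real.pi_ne_zero
    have hk2 : (k : ℝ) = 2 * n * m := by
      field_simp at hn3
      nlinarith [hn3, Real.pi_pos]
    have hkZ : (k : ℤ) = 2 * n * m := by exact_mod_cast hk2
    rcases le_or_gt n 0 with h | h
    · have : (k:ℤ) ≤ 0 := by nlinarith [Int.natCast_pos.2 hm]
      omega
    · have : (2*m : ℤ) ≤ k := by nlinarith [Int.natCast_pos.2 hm]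
      omega
  have hsum : ∑ j : Fin (2*m), q^(j:ℕ) = 0 := by
    rw [Fin.sum_univ_eq_sum_range (fun i => q^i), geom_sum_eq hq1]
    have hq2m : q^(2*m) = 1 := by
      rw [hq, ← Complex.exp_nat_mul]
      rw [show ((2*m : ℕ):ℂ) * (((k * Real.pi / m : ℝ) : ℂ) * Complex.I)
            = (k:ℤ) * (2 * Real.pi * Complex.I) by push_cast; field_simp]
      exact Complex.exp_int_mul_two_pi_mul_I k
    rw [hq2m]
    simp
  rw [hsum, mul_zero]


open Complex in
lemma u_pow_2m (m : ℕ) (j : Fin (2*m)) :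
    (Complex.exp (Complex.I * ((Real.pi * (2*(j:ℝ)+1) / (2*m) : ℝ) : ℂ)))^(2*m) = -1 := by
  have hm : 0 < m := by by_contra h; exact absurd j.2 (by omega)
  have hmC : (m:ℂ) ≠ 0 := Nat.cast_ne_zero.2 hm.ne'
  rw [← Complex.exp_nat_mul]
  rw [show ((2*m : ℕ):ℂ) * (Complex.I * ((Real.pi * (2*(j:ℝ)+1) / (2*m) : ℝ) : ℂ))
        = ((2*(j:ℕ)+1 : ℕ):ℂ) * ((Real.pi:ℂ) * Complex.I) by push_cast; field_simp]
  rw [Complex.exp_nat_mul, Complex.exp_pi_mul_I]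
  exact Odd.neg_one_pow ⟨j, rfl⟩

open Complex in
lemma sum_c_div (m : ℕ) (hm : 0 < m) (c : ℂ) (hc : c^(2*m) + 1 ≠ 0) :
    ∑ j : Fin (2*m), c / (Complex.exp (Complex.I * ((Real.pi * (2*(j:ℝ)+1) / (2*m) : ℝ) : ℂ)) - c)
      = -(2*m) * c^(2*m) / (c^(2*m)+1) := by
  set u : Fin (2*m) → ℂ := fun j => Complex.exp (Complex.I * ((Real.pi * (2*(j:ℝ)+1) / (2*m) : ℝ) : ℂ)) with hu
  have hu2m : ∀ j, (u j)^(2*m) = -1 := fun j => u_pow_2m m j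
  have hne : ∀ j, u j - c ≠ 0 := by
    intro j h
    rw [sub_eq_zero] at h
    exact hc (by rw [← h, hu2m j]; ring)
  have key : ∀ j, c / (u j - c)
      = -c * (∑ i ∈ Finset.range (2*m), c^i * (u j)^(2*m - 1 - i)) / (c^(2*m)+1) := by
    intro j
    rw [div_eq_div_iff (hne j) hc]
    have hg := geom_sum₂_mul c (u j) (2*m)
    rw [hu2m j] at hg
    linear_combination (-c) * hg
  rw [Finset.sum_congr rfl (fun j _ => key j), ← Finset.sum_div, ← Finset.mul_sum]
  have hswap : ∑ j : Fin (2*m), ∑ i ∈ Finset.range (2*m), c^i * (u j)^(2*m - 1 - i)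
      = ∑ i ∈ Finset.range (2*m), c^i * (∑ j : Fin (2*m), (u j)^(2*m - 1 - i)) := by
    rw [Finset.sum_comm]
    exact Finset.sum_congr rfl (fun i _ => by rw [Finset.mul_sum])
  have hzero : ∀ i ∈ Finset.range (2*m), i ≠ 2*m - 1 →
      c^i * (∑ j : Fin (2*m), (u j)^(2*m - 1 - i)) = 0 := by
    intro i hi hne'
    rw [Finset.mem_range] at hi
    rw [sum_u_pow m hm (2*m-1-i) (by omega) (by omega), mul_zero]
  have hlast : c^(2*m-1) * (∑ j : Fin (2*m), (u j)^(2*m - 1 - (2*m-1))) = c^(2*m-1) * (2*m) := by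
    congr 1
    rw [show 2*m - 1 - (2*m-1) = 0 by omega]
    simp
  have hsum2 : ∑ j : Fin (2*m), ∑ i ∈ Finset.range (2*m), c^i * (u j)^(2*m - 1 - i)
      = c^(2*m-1) * (2*m) := by
    rw [hswap, Finset.sum_eq_single_of_mem (2*m-1) (Finset.mem_range.2 (by omega))
      (fun i hi h => hzero i hi h), hlast]
  rw [hsum2]
  rw [show 2*m = (2*m-1)+1 by omega]
  congr 1
  rw [pow_succ]
  push_cast
  ring

open Polynomial Polynomial.Chebyshev in
lemma cheb_rep (m : ℕ) (y : ℝ) (hy : 1 ≤ |y|) :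
    2 * ((T ℝ (2*m)).eval y)
      = (|y| + Real.sqrt (y^2-1))^(2*m) + ((|y| + Real.sqrt (y^2-1))⁻¹)^(2*m) := by
  have hs0 : 0 ≤ y^2 - 1 := by nlinarith [sq_abs y]
  set s := Real.sqrt (y^2-1) with hsdef
  have hs : s^2 = y^2 - 1 := Real.sq_sqrt hs0
  have hsnn : 0 ≤ s := Real.sqrt_nonneg _
  have hu1 : 1 ≤ |y| + s := by linarith
  have hu0 : |y| + s ≠ 0 := by linarith
  rcases le_or_gt 0 y with h | h
  · have hay : |y| = y := abs_of_nonneg h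
    rw [hay] at hu0 ⊢
    have hmul : (y + s) * (y - s) = 1 := by nlinarith [hs]
    have hinv : (y + s)⁻¹ = y - s := inv_eq_of_mul_eq_one_right hmul
    have h2 := cheb_half (y+s) hu0 y (by rw [hinv]; ring) (2*m)
    push_cast at h2 ⊢
    exact h2
  · have hay : |y| = -y := abs_of_neg h
    rw [hay] at hu0 ⊢
    have hz0 : y - s ≠ 0 := by
      intro h0
      have : (y - s) * (y + s) = 1 := by nlinarith [hs]
      rw [h0, zero_mul] at this; norm_num at this
    have hmul : (y - s) * (y + s) = 1 := by nlinarith [hs]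
    have hinv : (y - s)⁻¹ = y + s := inv_eq_of_mul_eq_one_right hmul
    have h2 := cheb_half (y-s) hz0 y (by rw [hinv]; ring) (2*m)
    push_cast at h2 ⊢
    rw [h2]
    have e1 : -y + s = -(y - s) := by ring
    rw [e1, Even.neg_pow (even_two_mul m), inv_neg, Even.neg_pow (even_two_mul m), hinv]

open Polynomial Polynomial.Chebyshev in
lemma cheb_ge_one (m : ℕ) (y : ℝ) (hy : 1 ≤ |y|) : 1 ≤ (T ℝ (2*m)).eval y := by
  have h := cheb_rep m y hy
  set u := |y| + Real.sqrt (y^2-1) with hu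
  have hu1 : 1 ≤ u := by
    have := Real.sqrt_nonneg (y^2-1); simp only [hu]; linarith
  have hA : 1 ≤ u^(2*m) := one_le_pow₀ hu1
  have hAi : 0 < (u^(2*m))⁻¹ := by positivity
  have hprod : u^(2*m) * (u^(2*m))⁻¹ = 1 := mul_inv_cancel₀ (by positivity)
  have : (u⁻¹)^(2*m) = (u^(2*m))⁻¹ := by rw [← inv_pow]
  nlinarith [h, hA, hAi, hprod, this]

open Polynomial Polynomial.Chebyshev in
lemma cheb_lb (m : ℕ) (y : ℝ) : -1 ≤ (T ℝ (2*m)).eval y := by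
  rcases le_or_gt (|y|) 1 with h | h
  · have hy1 : -1 ≤ y := by cases abs_le.1 h; linarith
    have hy2 : y ≤ 1 := by cases abs_le.1 h; linarith
    have := Polynomial.Chebyshev.T_real_cos (Real.arccos y) (2*m)
    rw [Real.cos_arccos hy1 hy2] at this
    rw [this]
    exact Real.neg_one_le_cos _
  · linarith [cheb_ge_one m y h.le]

open Polynomial Polynomial.Chebyshev in
lemma cheb_ub (m : ℕ) (y : ℝ) (h : |y| ≤ 1) : (T ℝ (2*m)).eval y ≤ 1 := by
  have hy1 : -1 ≤ y := by cases abs_le.1 h; linarith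
  have hy2 : y ≤ 1 := by cases abs_le.1 h; linarith
  have := Polynomial.Chebyshev.T_real_cos (Real.arccos y) (2*m)
  rw [Real.cos_arccos hy1 hy2] at this
  rw [this]
  exact Real.cos_le_one _

open Polynomial Polynomial.Chebyshev in
lemma cheb_mono (m : ℕ) (c y : ℝ) (hc : 1 ≤ c) (hcy : c ≤ |y|) :
    (T ℝ (2*m)).eval c ≤ (T ℝ (2*m)).eval y := by
  have hc' : 1 ≤ |c| := by rw [abs_of_nonneg (by linarith)]; exact hc
  have h1 := cheb_rep m c hc'
  have h2 := cheb_rep m y (le_trans hc hcy)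
  rw [abs_of_nonneg (by linarith : (0:ℝ) ≤ c)] at h1
  set uc := c + Real.sqrt (c^2-1) with huc
  set uy := |y| + Real.sqrt (y^2-1) with huy
  have hucy : uc ≤ uy := by
    have : Real.sqrt (c^2-1) ≤ Real.sqrt (y^2-1) := by
      apply Real.sqrt_le_sqrt; nlinarith [sq_abs y]
    linarith
  have huc1 : 1 ≤ uc := by have := Real.sqrt_nonneg (c^2-1); linarith
  set A := uc^(2*m) with hA
  set B := uy^(2*m) with hB
  have hA1 : 1 ≤ A := one_le_pow₀ huc1
  have hAB : A ≤ B := pow_le_pow_left₀ (by linarith) hucy _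
  have hA0 : (0:ℝ) < A := by linarith
  have hB0 : (0:ℝ) < B := by linarith
  have hiA : (uc⁻¹)^(2*m) = A⁻¹ := by rw [← inv_pow]
  have hiB : (uy⁻¹)^(2*m) = B⁻¹ := by rw [← inv_pow]
  rw [hiA] at h1; rw [hiB] at h2
  have key : A + A⁻¹ ≤ B + B⁻¹ := by
    have hABprod : 1 ≤ A*B := by nlinarith
    have hinv2 : (A*B)⁻¹ ≤ 1 := inv_le_one_of_one_le₀ hABprod
    have hinv3 : A⁻¹ - B⁻¹ = (B-A) * (A*B)⁻¹ := by field_simp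
    have h5 : 0 ≤ (B-A) * (1 - (A*B)⁻¹) := mul_nonneg (by linarith) (by linarith)
    have h6 : (B-A)*(1-(A*B)⁻¹) = (B-A) - (A⁻¹ - B⁻¹) := by rw [hinv3]; ring
    linarith
  linarith

open Polynomial Polynomial.Chebyshev in
lemma cheb_one (m : ℕ) : (T ℝ (2*m)).eval 1 = 1 := by
  have h := cheb_half (1:ℝ) one_ne_zero 1 (by norm_num) (2*m)
  push_cast at h
  simp at h
  exact T_eval_one ℝ _


open Complex in
lemma exists_t (S : ℝ) (hS : 1 < S) (m : ℕ) (hm : 0 < m) (r : ℝ) :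
    ∃ t : ℂ, t ≠ 0 ∧ t + t⁻¹ = 2*((r : ℝ):ℂ) ∧
      ((S:ℂ)⁻¹*t)^(2*m) + 1 ≠ 0 ∧ ((S:ℂ)⁻¹*t⁻¹)^(2*m) + 1 ≠ 0 := by
  have hS0 : (0:ℝ) < S := by linarith
  have hSi1 : S⁻¹ < 1 := by rw [inv_lt_one_iff₀]; right; exact hS
  have hSi0 : (0:ℝ) < S⁻¹ := by positivity
  have habs_small : ∀ z : ℂ, ‖z‖ = 1 → ((S:ℂ)⁻¹*z)^(2*m) + 1 ≠ 0 := by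
    intro z hz h
    have h2 : ((S:ℂ)⁻¹*z)^(2*m) = -1 := by linear_combination h
    have h3 : ‖((S:ℂ)⁻¹*z)^(2*m)‖ = 1 := by rw [h2]; simp
    rw [norm_pow, norm_mul, hz, mul_one] at h3
    have h4 : ‖(S:ℂ)⁻¹‖ = S⁻¹ := by
      rw [norm_inv, Complex.norm_real, Real.norm_eq_abs, abs_of_pos hS0]
    rw [h4] at h3
    have : S⁻¹ ^ (2*m) < 1 := pow_lt_one₀ hSi0.le hSi1 (by omega)
    rw [h3] at this; exact lt_irrefl _ this
  have hreal : ∀ y : ℝ, ((S:ℂ)⁻¹*(y:ℂ))^(2*m) + 1 ≠ 0 := by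
    intro y
    rw [show (S:ℂ)⁻¹*(y:ℂ) = ((S⁻¹*y : ℝ):ℂ) by push_cast; ring, ← Complex.ofReal_pow,
      show (((S⁻¹*y)^(2*m) : ℝ):ℂ) + 1 = (((S⁻¹*y)^(2*m) + 1 : ℝ):ℂ) by push_cast; ring]
    refine Complex.ofReal_ne_zero.2 ?_
    have h1 : (0:ℝ) ≤ (S⁻¹*y)^(2*m) := Even.pow_nonneg (even_two_mul m) _
    have h2 : (0:ℝ) < (S⁻¹*y)^(2*m) + 1 := by linarith
    exact h2.ne'
  rcases le_or_gt (|r|) 1 with h | h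
  · set t : ℂ := ⟨r, Real.sqrt (1-r^2)⟩ with htdef
    have hr2 : 0 ≤ 1 - r^2 := by nlinarith [_root_.sq_abs r, _root_.abs_nonneg r]
    have hns : Complex.normSq t = 1 := by
      rw [htdef, Complex.normSq_mk]
      have := Real.mul_self_sqrt hr2
      nlinarith [this]
    have habs : ‖t‖ = 1 := by rw [Complex.norm_def, hns, Real.sqrt_one]
    have ht0 : t ≠ 0 := by
      intro h0; rw [h0] at habs; simp at habs
    have hinv : t⁻¹ = starRingEnd ℂ t := by
      rw [Complex.inv_def, hns]; simp
    refine ⟨t, ht0, ?_, habs_small t habs, habs_small t⁻¹ (by rw [norm_inv, habs]; norm_num)⟩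
    rw [hinv, Complex.add_conj, htdef]
    norm_num
  · have hrs : (0:ℝ) ≤ r^2 - 1 := by nlinarith [_root_.sq_abs r]
    set sq := Real.sqrt (r^2-1) with hsq
    have hmul : (r + sq) * (r - sq) = 1 := by nlinarith [Real.sq_sqrt hrs]
    have htR0 : r + sq ≠ 0 := by
      intro h0; rw [h0, zero_mul] at hmul; norm_num at hmul
    have hinv : (r + sq)⁻¹ = r - sq := inv_eq_of_mul_eq_one_right hmul
    refine ⟨((r + sq : ℝ) : ℂ), Complex.ofReal_ne_zero.2 htR0, ?_, hreal (r+sq), ?_⟩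
    · rw [← Complex.ofReal_inv, ← Complex.ofReal_add, hinv]
      push_cast; ring
    · rw [← Complex.ofReal_inv (r+sq)]
      exact hreal ((r+sq)⁻¹)





set_option maxHeartbeats 1000000 in
open Polynomial Polynomial.Chebyshev in
lemma master
    (m : ℕ) (hm : 0 < m) (S : ℝ) (hS : 1 < S)
    (θ : Fin (2 * m) → ℝ)
    (hθ : ∀ j, θ j = Real.pi * (2 * (j : ℝ) + 1) / (2 * m))
    (zn w : Fin (2 * m) → ℂ)
    (hzn : ∀ j, zn j =
      ((S : ℂ) * Complex.exp (Complex.I * (θ j : ℂ)) +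
        (S : ℂ)⁻¹ * Complex.exp (-(Complex.I * (θ j : ℂ)))) / ((S : ℂ) + (S : ℂ)⁻¹))
    (hw : ∀ j, w j =
      (1 / (2 * (m : ℂ))) *
        ((S : ℂ) * Complex.exp (Complex.I * (θ j : ℂ)) -
          (S : ℂ)⁻¹ * Complex.exp (-(Complex.I * (θ j : ℂ)))) / ((S : ℂ) + (S : ℂ)⁻¹))
    (α β : ℝ)
    (hα : α = (S ^ (2 * m) + S⁻¹ ^ (2 * m)) / (S ^ (2 * m) - S⁻¹ ^ (2 * m)))
    (hβ : β = 2 / (S ^ (2 * m) - S⁻¹ ^ (2 * m)))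
    (rT : ℝ → ℂ)
    (hrT : ∀ x, rT x = ∑ j, w j / (zn j - (x : ℂ)))
    (G : ℝ) (hG : G = 2 / (S + S⁻¹)) (x : ℝ) :
    rT x = (((α + β * (T ℝ (2*m)).eval (x/G))⁻¹ : ℝ) : ℂ) := by
  have hS0 : (0:ℝ) < S := by linarith
  have hSi1 : S⁻¹ < 1 := by rw [inv_lt_one_iff₀]; right; exact hS
  have hSi0 : (0:ℝ) < S⁻¹ := by positivity
  have hK2 : 2 < S + S⁻¹ := by
    have h1 : S * S⁻¹ = 1 := mul_inv_cancel₀ hS0.ne'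
    nlinarith [sq_nonneg (S - 1)]
  have hG0 : 0 < G := by rw [hG]; positivity
  -- real Chebyshev value
  set τ : ℝ := (T ℝ (2*m)).eval (x/G) with hτdef
  have hτ : -1 ≤ τ := cheb_lb m (x/G)
  set P : ℝ := S ^ (2*m) with hPdef
  set Q : ℝ := S⁻¹ ^ (2*m) with hQdef
  have hP1 : 1 < P := one_lt_pow₀ hS (by omega)
  have hQ0 : 0 < Q := by positivity
  have hQ1 : Q < 1 := pow_lt_one₀ hSi0.le hSi1 (by omega)
  have hPQ : P * Q = 1 := by
    rw [hPdef, hQdef, ← mul_pow, mul_inv_cancel₀ hS0.ne', one_pow]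
  -- the parameter t
  obtain ⟨t, ht0, htsum, hA1, hB1⟩ := exists_t S hS m hm (x/G)
  have hSC : (S:ℂ) ≠ 0 := Complex.ofReal_ne_zero.2 hS0.ne'
  have htinv : t * t⁻¹ = 1 := mul_inv_cancel₀ ht0
  have hKC : (S:ℂ) + (S:ℂ)⁻¹ ≠ 0 := by
    rw [show (S:ℂ) + (S:ℂ)⁻¹ = ((S + S⁻¹ : ℝ):ℂ) by push_cast; ring]
    exact Complex.ofReal_ne_zero.2 (by linarith)
  have h2m0 : (2*(m:ℂ)) ≠ 0 := by
    have : ((2*m : ℕ):ℂ) ≠ 0 := Nat.cast_ne_zero.2 (by omega)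
    push_cast at this ⊢; exact this
  -- Chebyshev value via t
  have hmapT : (T ℂ (2*(m:ℤ))).eval (((x/G : ℝ)):ℂ) = ((τ : ℝ) : ℂ) := by
    rw [hτdef]
    rw [show (T ℂ (2*(m:ℤ))) = (T ℝ (2*(m:ℤ))).map Complex.ofRealHom by
      rw [Polynomial.Chebyshev.map_T]]
    rw [show (((x/G : ℝ)):ℂ) = Complex.ofRealHom (x/G) from rfl, Polynomial.eval_map,
      Polynomial.eval₂_at_apply]
    rfl
  have htt : t^(2*m) + (t⁻¹)^(2*m) = 2 * ((τ : ℝ) : ℂ) := by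
    have hhalf := cheb_half t ht0 (((x/G:ℝ)):ℂ) htsum.symm (2*m)
    rw [show ((2*m : ℕ):ℤ) = 2*(m:ℤ) by push_cast; ring, hmapT] at hhalf
    exact hhalf.symm
  -- per-term identity
  have hSS : (S:ℂ)*(S:ℂ)⁻¹ = 1 := mul_inv_cancel₀ hSC
  have hx2 : 2*(x/G) = (S+S⁻¹)*x := by rw [hG]; field_simp
  have ht2 : t + t⁻¹ = ((S:ℂ)+(S:ℂ)⁻¹) * (x:ℂ) := by
    rw [htsum, show (2:ℂ)*((x/G:ℝ):ℂ) = ((2*(x/G):ℝ):ℂ) by push_cast; ring, hx2]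
    push_cast; ring
  have hterm : ∀ j, w j / (zn j - (x:ℂ)) = 1/(2*(m:ℂ)) *
      (1 + ((S:ℂ)⁻¹*t)/(Complex.exp (Complex.I * ((θ j : ℝ):ℂ)) - (S:ℂ)⁻¹*t)
         + ((S:ℂ)⁻¹*t⁻¹)/(Complex.exp (Complex.I * ((θ j : ℝ):ℂ)) - (S:ℂ)⁻¹*t⁻¹)) := by
    intro j
    have hu2mj : (Complex.exp (Complex.I * ((θ j : ℝ):ℂ)))^(2*m) = -1 := by
      rw [hθ j]; exact_mod_cast u_pow_2m m j
    set u := Complex.exp (Complex.I * ((θ j:ℝ):ℂ)) with hu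
    have hu0 : u ≠ 0 := Complex.exp_ne_zero _
    have hua : u - (S:ℂ)⁻¹*t ≠ 0 := by
      intro h0; rw [sub_eq_zero] at h0
      exact hA1 (by rw [← h0, hu2mj]; ring)
    have hub : u - (S:ℂ)⁻¹*t⁻¹ ≠ 0 := by
      intro h0; rw [sub_eq_zero] at h0
      exact hB1 (by rw [← h0, hu2mj]; ring)
    have huu : u⁻¹ * u = 1 := inv_mul_cancel₀ hu0
    have e0 : zn j * ((S:ℂ)+(S:ℂ)⁻¹) = (S:ℂ)*u + (S:ℂ)⁻¹*u⁻¹ := by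
      rw [hzn j, Complex.exp_neg, ← hu, div_mul_cancel₀ _ hKC]
    have hE : (zn j - (x:ℂ)) * (((S:ℂ)+(S:ℂ)⁻¹) * u)
        = (S:ℂ) * ((u - (S:ℂ)⁻¹*t)*(u - (S:ℂ)⁻¹*t⁻¹)) := by
      linear_combination u*e0 + (S:ℂ)⁻¹*huu + (S:ℂ)*(S:ℂ)⁻¹*u*ht2
        + ((x:ℂ)*((S:ℂ)+(S:ℂ)⁻¹)*u - (S:ℂ)⁻¹)*hSS + (-(S:ℂ)*(S:ℂ)⁻¹*(S:ℂ)⁻¹)*htinv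
    have hden : zn j - (x:ℂ) ≠ 0 := by
      intro h0
      apply mul_ne_zero hSC (mul_ne_zero hua hub)
      rw [← hE, h0, zero_mul]
    have e0w : w j * ((S:ℂ)+(S:ℂ)⁻¹) = (1/(2*(m:ℂ)))*((S:ℂ)*u - (S:ℂ)⁻¹*u⁻¹) := by
      rw [hw j, Complex.exp_neg, ← hu, div_mul_cancel₀ _ hKC]
    have hkey : w j * (((S:ℂ)+(S:ℂ)⁻¹) * u) = (1/(2*(m:ℂ))) * ((S:ℂ)*u^2 - (S:ℂ)⁻¹) := by
      linear_combination u*e0w - (1/(2*(m:ℂ)))*(S:ℂ)⁻¹*huu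
    have hKu : ((S:ℂ)+(S:ℂ)⁻¹) * u ≠ 0 := mul_ne_zero hKC hu0
    calc w j / (zn j - (x:ℂ))
        = (w j * (((S:ℂ)+(S:ℂ)⁻¹) * u)) / ((zn j - (x:ℂ)) * (((S:ℂ)+(S:ℂ)⁻¹) * u)) :=
          (mul_div_mul_right _ _ hKu).symm
      _ = ((1/(2*(m:ℂ))) * ((S:ℂ)*u^2 - (S:ℂ)⁻¹))
            / ((S:ℂ) * ((u - (S:ℂ)⁻¹*t)*(u - (S:ℂ)⁻¹*t⁻¹))) := by rw [hkey, hE]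
      _ = 1/(2*(m:ℂ)) * (1 + ((S:ℂ)⁻¹*t)/(u - (S:ℂ)⁻¹*t) + ((S:ℂ)⁻¹*t⁻¹)/(u - (S:ℂ)⁻¹*t⁻¹)) := by
          rw [div_eq_iff (mul_ne_zero hSC (mul_ne_zero hua hub))]
          have f1 : ((S:ℂ)⁻¹*t)/(u-(S:ℂ)⁻¹*t) * (u-(S:ℂ)⁻¹*t) = (S:ℂ)⁻¹*t :=
            div_mul_cancel₀ _ hua
          have f2 : ((S:ℂ)⁻¹*t⁻¹)/(u-(S:ℂ)⁻¹*t⁻¹) * (u-(S:ℂ)⁻¹*t⁻¹) = (S:ℂ)⁻¹*t⁻¹ :=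
            div_mul_cancel₀ _ hub
          linear_combination (-(1/(2*(m:ℂ)))*(S:ℂ)*(u - (S:ℂ)⁻¹*t⁻¹))*f1
            + (-(1/(2*(m:ℂ)))*(S:ℂ)*(u - (S:ℂ)⁻¹*t))*f2
            + ((1/(2*(m:ℂ)))*(S:ℂ)⁻¹*t*t⁻¹)*hSS + ((1/(2*(m:ℂ)))*(S:ℂ)⁻¹)*htinv
  -- summation
  have hsa := sum_c_div m hm ((S:ℂ)⁻¹*t) hA1
  have hsb := sum_c_div m hm ((S:ℂ)⁻¹*t⁻¹) hB1
  have hsum1 : rT x = 1/(2*(m:ℂ)) * (((2*m:ℕ):ℂ)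
      + (-(2*(m:ℂ)) * ((S:ℂ)⁻¹*t)^(2*m)/(((S:ℂ)⁻¹*t)^(2*m)+1))
      + (-(2*(m:ℂ)) * ((S:ℂ)⁻¹*t⁻¹)^(2*m)/(((S:ℂ)⁻¹*t⁻¹)^(2*m)+1))) := by
    rw [hrT x, Finset.sum_congr rfl (fun j _ => hterm j), ← Finset.mul_sum]
    congr 1
    rw [Finset.sum_add_distrib, Finset.sum_add_distrib]
    congr 1
    · congr 1
      · simp
      · rw [← hsa]
        refine Finset.sum_congr rfl (fun j _ => by rw [hθ j])
    · rw [← hsb]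
      refine Finset.sum_congr rfl (fun j _ => by rw [hθ j])
  -- convert to real closed form
  set A : ℂ := ((S:ℂ)⁻¹*t)^(2*m) with hAdef
  set B : ℂ := ((S:ℂ)⁻¹*t⁻¹)^(2*m) with hBdef
  have hsum : rT x = 1 - A/(A+1) - B/(B+1) := by
    rw [hsum1]
    push_cast
    field_simp [h2m0, hA1, hB1]
    ring
    have hmC : (m:ℂ) ≠ 0 := Nat.cast_ne_zero.2 hm.ne'
    linear_combination (1 - A*B) * (mul_inv_cancel₀ hmC)
  have hABC : A * B = ((Q:ℝ):ℂ)^2 := by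
    rw [hAdef, hBdef, ← mul_pow,
      show ((S:ℂ)⁻¹*t)*((S:ℂ)⁻¹*t⁻¹) = (S:ℂ)⁻¹*(S:ℂ)⁻¹ by
        linear_combination (S:ℂ)⁻¹*(S:ℂ)⁻¹*htinv]
    rw [hQdef]
    push_cast
    ring
  have hApB : A + B = ((Q:ℝ):ℂ) * (2 * ((τ:ℝ):ℂ)) := by
    rw [hAdef, hBdef, mul_pow, mul_pow, ← mul_add, htt, hQdef]
    push_cast
    ring
  have hDC : (A+1)*(B+1) = ((Q:ℝ):ℂ)^2 + 2*((Q:ℝ):ℂ)*((τ:ℝ):ℂ) + 1 := by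
    linear_combination hABC + hApB
  have hDR : (0:ℝ) < Q^2 + 2*Q*τ + 1 := by
    nlinarith [mul_pos (by linarith : (0:ℝ) < 1-Q) (by linarith : (0:ℝ) < 1-Q),
      mul_le_mul_of_nonneg_left hτ hQ0.le]
  have hfrac : rT x = (((1-Q^2)/(Q^2 + 2*Q*τ + 1) : ℝ):ℂ) := by
    rw [hsum, show (1:ℂ) - A/(A+1) - B/(B+1) = (1 - A*B)/((A+1)*(B+1)) by
      field_simp [hA1, hB1]; ring, hABC, hDC]
    push_cast
    ring
  rw [hfrac]
  congr 1
  -- real identity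
  have hPQpos : 0 < P - Q := by linarith
  have hden2 : 0 < P + Q + 2*τ := by nlinarith [sq_nonneg (P-1), hPQ, hP1, hτ, hQ0]
  have hαβ : α + β*τ = (P + Q + 2*τ)/(P - Q) := by
    rw [hα, hβ]
    field_simp
  rw [hαβ, inv_div, div_eq_div_iff hDR.ne' hden2.ne']
  linear_combination (-2*(Q+τ)) * hPQ

open Polynomial Polynomial.Chebyshev in
lemma cheb_neg (m : ℕ) (y : ℝ) (hy : 1 ≤ |y|) :
    (T ℝ (2*m)).eval (-y) = (T ℝ (2*m)).eval y := by
  have h1 := cheb_rep m y hy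
  have h2 := cheb_rep m (-y) (by rwa [abs_neg])
  rw [abs_neg, neg_sq] at h2
  linarith



set_option maxHeartbeats 1000000 in
/-- **Worst-case convergence factor of the trapezoid rule with the natural parameter
choice** (Güttel–Polizzi–Tang–Viaud, Section 5).  With `G = 2/(S+S⁻¹)`, one has
`0 < r_m^{(T)}(x) ≤ 1/(α + β T_{2m}(G^{-2}))` for `|x| ≥ 1/G` with equality at
`x = ±1/G`, and `r_m^{(T)}(x) ≥ 1/(α+β)` for `|x| ≤ G`; consequently the worst-case
convergence factor equals `(α+β)/(α + β T_{2m}(G^{-2}))`. -/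
theorem trapezoid_rule_worst_case_factor
    (m : ℕ) (hm : 0 < m) (S : ℝ) (hS : 1 < S)
    (θ : Fin (2 * m) → ℝ)
    (hθ : ∀ j, θ j = Real.pi * (2 * (j : ℝ) + 1) / (2 * m))
    (zn w : Fin (2 * m) → ℂ)
    (hzn : ∀ j, zn j =
      ((S : ℂ) * Complex.exp (Complex.I * (θ j : ℂ)) +
        (S : ℂ)⁻¹ * Complex.exp (-(Complex.I * (θ j : ℂ)))) / ((S : ℂ) + (S : ℂ)⁻¹))
    (hw : ∀ j, w j =
      (1 / (2 * (m : ℂ))) *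
        ((S : ℂ) * Complex.exp (Complex.I * (θ j : ℂ)) -
          (S : ℂ)⁻¹ * Complex.exp (-(Complex.I * (θ j : ℂ)))) / ((S : ℂ) + (S : ℂ)⁻¹))
    (α β : ℝ)
    (hα : α = (S ^ (2 * m) + S⁻¹ ^ (2 * m)) / (S ^ (2 * m) - S⁻¹ ^ (2 * m)))
    (hβ : β = 2 / (S ^ (2 * m) - S⁻¹ ^ (2 * m)))
    (rT : ℝ → ℂ)
    (hrT : ∀ x, rT x = ∑ j, w j / (zn j - (x : ℂ)))
    (G : ℝ) (hG : G = 2 / (S + S⁻¹)) :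
    (∀ x : ℝ, 1 / G ≤ |x| →
        (rT x).im = 0 ∧ 0 < (rT x).re ∧
          (rT x).re ≤ 1 / (α + β * (Polynomial.Chebyshev.T ℝ (2 * m)).eval (G⁻¹ ^ 2))) ∧
      (rT (1 / G)).re = 1 / (α + β * (Polynomial.Chebyshev.T ℝ (2 * m)).eval (G⁻¹ ^ 2)) ∧
      (rT (-(1 / G))).re = 1 / (α + β * (Polynomial.Chebyshev.T ℝ (2 * m)).eval (G⁻¹ ^ 2)) ∧
      (∀ x : ℝ, |x| ≤ G → 1 / (α + β) ≤ (rT x).re) ∧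
      sSup ((fun x : ℝ => (rT x).re) '' {x : ℝ | 1 / G ≤ |x|}) /
          sInf ((fun x : ℝ => (rT x).re) '' {x : ℝ | |x| ≤ G})
        = (α + β) / (α + β * (Polynomial.Chebyshev.T ℝ (2 * m)).eval (G⁻¹ ^ 2)) := by
  have hS0 : (0:ℝ) < S := by linarith
  have hSi1 : S⁻¹ < 1 := by rw [inv_lt_one_iff₀]; right; exact hS
  have hSi0 : (0:ℝ) < S⁻¹ := by positivity
  have hK2 : 2 < S + S⁻¹ := by nlinarith [mul_inv_cancel₀ hS0.ne', sq_nonneg (S-1)]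
  have hG0 : 0 < G := by rw [hG]; positivity
  have hG1 : G < 1 := by rw [hG, div_lt_one (by linarith)]; linarith
  have hP1 : 1 < S ^ (2*m) := one_lt_pow₀ hS (by omega)
  have hQ0 : 0 < S⁻¹ ^ (2*m) := by positivity
  have hQ1 : S⁻¹ ^ (2*m) < 1 := pow_lt_one₀ hSi0.le hSi1 (by omega)
  have hPQ : S ^ (2*m) * S⁻¹ ^ (2*m) = 1 := by
    rw [← mul_pow, mul_inv_cancel₀ hS0.ne', one_pow]
  have hPQpos : (0:ℝ) < S ^ (2*m) - S⁻¹ ^ (2*m) := by linarith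
  have hβ0 : 0 < β := by rw [hβ]; exact div_pos two_pos hPQpos
  have hαβm : 0 < α - β := by
    rw [hα, hβ, div_sub_div_same]
    exact div_pos (by nlinarith [hPQ]) hPQpos
  have hpos : ∀ y : ℝ, 0 < α + β * (Polynomial.Chebyshev.T ℝ (2*m)).eval y := by
    intro y
    nlinarith [mul_le_mul_of_nonneg_left (cheb_lb m y) hβ0.le]
  have hre : ∀ x : ℝ, (rT x).re = (α + β * (Polynomial.Chebyshev.T ℝ (2*m)).eval (x/G))⁻¹ := by
    intro x
    rw [master m hm S hS θ hθ zn w hzn hw α β hα hβ rT hrT G hG x]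
    exact Complex.ofReal_re _
  have him : ∀ x : ℝ, (rT x).im = 0 := by
    intro x
    rw [master m hm S hS θ hθ zn w hzn hw α β hα hβ rT hrT G hG x]
    exact Complex.ofReal_im _
  have hGi1 : 1 < G⁻¹ := (one_lt_inv_iff₀).2 ⟨hG0, hG1⟩
  have hc1 : (1:ℝ) ≤ G⁻¹^2 := one_le_pow₀ (by linarith)
  have hgg : (1/G)/G = G⁻¹^2 := by rw [pow_two, one_div, div_eq_mul_inv]
  have hposg := hpos (G⁻¹^2)
  have hub1 : ∀ x : ℝ, 1/G ≤ |x| →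
      (Polynomial.Chebyshev.T ℝ (2*m)).eval (G⁻¹^2) ≤ (Polynomial.Chebyshev.T ℝ (2*m)).eval (x/G) := by
    intro x hx
    apply cheb_mono m _ _ hc1
    rw [abs_div, abs_of_pos hG0, ← hgg]
    gcongr
  have main1 : ∀ x : ℝ, 1/G ≤ |x| →
      (rT x).im = 0 ∧ 0 < (rT x).re ∧
        (rT x).re ≤ 1 / (α + β * (Polynomial.Chebyshev.T ℝ (2*m)).eval (G⁻¹^2)) := by
    intro x hx
    refine ⟨him x, by rw [hre x]; exact inv_pos.2 (hpos _), ?_⟩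
    rw [hre x, one_div]
    apply inv_anti₀ hposg
    nlinarith [hub1 x hx, hβ0]
  have heq1 : (rT (1/G)).re = 1 / (α + β * (Polynomial.Chebyshev.T ℝ (2*m)).eval (G⁻¹^2)) := by
    rw [hre, hgg, one_div]
  have heq2 : (rT (-(1/G))).re = 1 / (α + β * (Polynomial.Chebyshev.T ℝ (2*m)).eval (G⁻¹^2)) := by
    rw [hre, neg_div, hgg, cheb_neg m _ (by rwa [abs_of_pos (by linarith)]), one_div]
  have main4 : ∀ x : ℝ, |x| ≤ G → 1/(α+β) ≤ (rT x).re := by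
    intro x hx
    rw [hre x, one_div]
    have h1 : |x/G| ≤ 1 := by
      rw [abs_div, abs_of_pos hG0, div_le_one hG0]; exact hx
    have h2 := cheb_ub m (x/G) h1
    apply inv_anti₀ (hpos _)
    nlinarith [hβ0]
  have hαβpos : 0 < α + β := by
    have := hpos 1
    rwa [cheb_one m, mul_one] at this
  have hsupval : sSup ((fun x : ℝ => (rT x).re) '' {x : ℝ | 1/G ≤ |x|})
      = 1 / (α + β * (Polynomial.Chebyshev.T ℝ (2*m)).eval (G⁻¹^2)) := by
    apply IsGreatest.csSup_eq
    constructor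
    · exact ⟨1/G, Set.mem_setOf_eq ▸ le_abs_self (1/G), heq1⟩
    · rintro v ⟨x, hx, rfl⟩
      exact (main1 x hx).2.2
  have hinfval : sInf ((fun x : ℝ => (rT x).re) '' {x : ℝ | |x| ≤ G})
      = 1 / (α + β) := by
    apply IsLeast.csInf_eq
    constructor
    · refine ⟨G, by rw [Set.mem_setOf_eq, abs_of_pos hG0], ?_⟩
      show (rT G).re = 1/(α+β)
      rw [hre, div_self hG0.ne', cheb_one m, mul_one, one_div]
    · rintro v ⟨x, hx, rfl⟩
      exact main4 x hx
  refine ⟨main1, heq1, heq2, main4, ?_⟩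
  rw [hsupval, hinfval, one_div, one_div, div_eq_div_iff (by positivity) (by positivity)]
  field_simp
  exact div_self (by rw [show (1:ℝ)/G^2 = G⁻¹^2 by rw [one_div, inv_pow]]; exact hposg.ne')
end
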